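/- arXiv:0903.0757 — 5 statements merged into one kernel-verified Lean document; each statement's English description precedes it below -/
import Mathlib

section
/- Let μ1, μ2 ∈ (1, ∞) and γ1, γ2 > 0 with μ1^{γ1} = μ2^{γ2}. Then there exist constants c, C > 0 and t0 > 0 such that c < h̃_{μ1,γ1}(t)/h̃_{μ2,γ2}(t) < C for all 0 < t < t0. -/
open Filter Set

noncomputable section

namespace Stmt5Aux

def L (μ : ℝ) : ℝ → ℝ := fun y => Real.log (1 + y / μ)

variable {μ : ℝ}

lemma L_nonneg (hμ : 0 < μ) {x : ℝ} (hx : 0 ≤ x) : 0 ≤ L μ x :=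
  Real.log_nonneg (by nlinarith [div_nonneg hx hμ.le])

lemma L_pos (hμ : 0 < μ) {x : ℝ} (hx : 0 < x) : 0 < L μ x :=
  Real.log_pos (by nlinarith [div_pos hx hμ])

lemma L_le (hμ : 0 < μ) {x : ℝ} (hx : 0 ≤ x) : L μ x ≤ x / μ := by
  have h := Real.log_le_sub_one_of_pos (show (0:ℝ) < 1 + x / μ by positivity)
  simpa [L] using h

lemma L_ge (hμ : 0 < μ) {x : ℝ} (hx : 0 ≤ x) : x / μ - (x / μ)^2 ≤ L μ x := by
  set t := x / μ with ht
  have htn : 0 ≤ t := div_nonneg hx hμ.le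
  have h1 : (0:ℝ) < 1 + t := by linarith
  have h := Real.log_le_sub_one_of_pos (show (0:ℝ) < (1+t)⁻¹ by positivity)
  rw [Real.log_inv] at h
  have h2 : 1 - (1+t)⁻¹ ≤ Real.log (1+t) := by linarith
  have h3 : t - t^2 ≤ 1 - (1+t)⁻¹ := by
    have key : 1 - (1+t)⁻¹ = t/(1+t) := by field_simp; ring
    rw [key, le_div_iff₀ h1]; nlinarith
  calc t - t^2 ≤ 1 - (1+t)⁻¹ := h3
    _ ≤ Real.log (1+t) := h2

lemma L_mono (hμ : 0 < μ) {x y : ℝ} (hx : 0 ≤ x) (hxy : x ≤ y) : L μ x ≤ L μ y := by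
  apply Real.log_le_log (by positivity)
  gcongr

end Stmt5Aux
namespace Stmt5Aux
variable {μ : ℝ}

lemma iter_nonneg (hμ : 0 < μ) {x : ℝ} (hx : 0 ≤ x) (n : ℕ) : 0 ≤ (L μ)^[n] x := by
  induction n with
  | zero => simpa
  | succ n ih => rw [Function.iterate_succ_apply']; exact L_nonneg hμ ih

lemma iter_pos (hμ : 0 < μ) {x : ℝ} (hx : 0 < x) (n : ℕ) : 0 < (L μ)^[n] x := by
  induction n with
  | zero => simpa
  | succ n ih => rw [Function.iterate_succ_apply']; exact L_pos hμ ih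

lemma iter_le (hμ : 0 < μ) {x : ℝ} (hx : 0 ≤ x) (n : ℕ) : (L μ)^[n] x ≤ x / μ^n := by
  induction n with
  | zero => simp
  | succ n ih =>
    rw [Function.iterate_succ_apply']
    calc L μ ((L μ)^[n] x) ≤ (L μ)^[n] x / μ := L_le hμ (iter_nonneg hμ hx n)
      _ ≤ (x / μ^n) / μ := by gcongr
      _ = x / μ^(n+1) := by rw [div_div, pow_succ]

lemma iter_mono (hμ : 0 < μ) {x y : ℝ} (hx : 0 ≤ x) (hxy : x ≤ y) (n : ℕ) :
    (L μ)^[n] x ≤ (L μ)^[n] y := by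
  induction n with
  | zero => simpa
  | succ n ih =>
    rw [Function.iterate_succ_apply', Function.iterate_succ_apply']
    exact L_mono hμ (iter_nonneg hμ hx n) ih

lemma a_antitone (hμ : 0 < μ) {x : ℝ} (hx : 0 ≤ x) :
    Antitone (fun n : ℕ => μ^n * (L μ)^[n] x) := by
  apply antitone_nat_of_succ_le
  intro n
  show μ^(n+1) * (L μ)^[n+1] x ≤ μ^n * (L μ)^[n] x
  rw [Function.iterate_succ_apply']
  have h1 : L μ ((L μ)^[n] x) ≤ (L μ)^[n] x / μ := L_le hμ (iter_nonneg hμ hx n)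
  have h2 : (0:ℝ) < μ^(n+1) := by positivity
  calc μ^(n+1) * L μ ((L μ)^[n] x) ≤ μ^(n+1) * ((L μ)^[n] x / μ) := by
        exact mul_le_mul_of_nonneg_left h1 h2.le
    _ = μ^n * (L μ)^[n] x := by
        rw [pow_succ]; field_simp

end Stmt5Aux
namespace Stmt5Aux
variable {μ : ℝ}

lemma exp_le_one_sub {t : ℝ} (h0 : 0 ≤ t) (h : t ≤ 1/2) : Real.exp (-(2*t)) ≤ 1 - t := by
  have h1 := Real.add_one_le_exp (2*t)
  have h2 := Real.exp_pos (2*t)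
  rw [Real.exp_neg, inv_eq_one_div, div_le_iff₀ h2]
  nlinarith

lemma a_lower (hμ : 1 < μ) {x : ℝ} (hx : 0 ≤ x) (hx2 : x ≤ 1/2) (n : ℕ) :
    x * Real.exp (2*x/(μ-1) * (1/μ^n - 1)) ≤ μ^n * (L μ)^[n] x := by
  have hμ0 : 0 < μ := lt_trans one_pos hμ
  induction n with
  | zero => simp
  | succ n ih =>
    set xn := (L μ)^[n] x with hxn
    have hxn0 : 0 ≤ xn := iter_nonneg hμ0 hx n
    have hxnle : xn ≤ x / μ^n := iter_le hμ0 hx n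
    have hpn : (0:ℝ) < μ^n := by positivity
    have hpn1 : (0:ℝ) < μ^(n+1) := by positivity
    have hμn1 : (1:ℝ) ≤ μ^(n+1) := one_le_pow₀ hμ.le
    rw [Function.iterate_succ_apply', ← hxn]
    have step1 : μ^n * xn * (1 - xn/μ) ≤ μ^(n+1) * L μ xn := by
      have := L_ge hμ0 hxn0
      have e1 : μ^(n+1) * (xn/μ - (xn/μ)^2) = μ^n * xn * (1 - xn/μ) := by
        field_simp; ring
      nlinarith [mul_le_mul_of_nonneg_left this hpn1.le]
    have hq : xn/μ ≤ x/μ^(n+1) := by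
      rw [pow_succ, ← div_div]
      gcongr
    have hq2 : x/μ^(n+1) ≤ 1/2 := by
      have h' : x/μ^(n+1) ≤ x/1 := by gcongr
      rw [div_one] at h'
      linarith
    have hq0 : 0 ≤ x/μ^(n+1) := by positivity
    have step2 : Real.exp (-(2*(x/μ^(n+1)))) ≤ 1 - xn/μ := by
      calc Real.exp (-(2*(x/μ^(n+1)))) ≤ 1 - x/μ^(n+1) := exp_le_one_sub hq0 hq2
        _ ≤ 1 - xn/μ := by linarith
    have step3 : x * Real.exp (2*x/(μ-1) * (1/μ^n - 1)) * Real.exp (-(2*(x/μ^(n+1))))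
        ≤ μ^n * xn * (1 - xn/μ) := by
      apply mul_le_mul ih step2 (Real.exp_pos _).le (by positivity)
    have key : 2*x/(μ-1) * (1/μ^n - 1) + -(2*(x/μ^(n+1))) = 2*x/(μ-1) * (1/μ^(n+1) - 1) := by
      have hne : μ - 1 ≠ 0 := by linarith
      field_simp
      ring
    calc x * Real.exp (2*x/(μ-1) * (1/μ^(n+1) - 1))
        = x * Real.exp (2*x/(μ-1) * (1/μ^n - 1)) * Real.exp (-(2*(x/μ^(n+1)))) := by
          rw [mul_assoc, ← Real.exp_add, key]
      _ ≤ μ^n * xn * (1 - xn/μ) := step3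
      _ ≤ μ^(n+1) * L μ xn := step1

end Stmt5Aux
namespace Stmt5Aux
variable {μ : ℝ} {Phi : ℝ → ℝ}

lemma Phi_nonneg (hμ : 0 < μ) {x : ℝ} (hx : 0 ≤ x)
    (hP : Tendsto (fun n : ℕ => μ^n * (L μ)^[n] x) atTop (nhds (Phi x))) : 0 ≤ Phi x :=
  ge_of_tendsto hP (Eventually.of_forall fun n => by
    have := iter_nonneg hμ hx n; positivity)

lemma Phi_le (hμ : 0 < μ) {x : ℝ} (hx : 0 ≤ x)
    (hP : Tendsto (fun n : ℕ => μ^n * (L μ)^[n] x) atTop (nhds (Phi x))) : Phi x ≤ x :=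
  le_of_tendsto hP (Eventually.of_forall fun n => by
    have h := a_antitone hμ hx (Nat.zero_le n); simpa using h)

lemma Phi_lb (hμ : 1 < μ) {x : ℝ} (hx : 0 ≤ x) (hx2 : x ≤ 1/2)
    (hP : Tendsto (fun n : ℕ => μ^n * (L μ)^[n] x) atTop (nhds (Phi x))) :
    x * Real.exp (-(2*x/(μ-1))) ≤ Phi x := by
  refine ge_of_tendsto hP (Eventually.of_forall fun n => ?_)
  refine le_trans ?_ (a_lower hμ hx hx2 n)
  apply mul_le_mul_of_nonneg_left _ hx
  apply Real.exp_le_exp.2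
  have h1 : (0:ℝ) ≤ 1/μ^n := by positivity
  have h2 : (0:ℝ) ≤ 2*x/(μ-1) := by
    apply div_nonneg (by linarith) (by linarith)
  nlinarith

lemma Phi_mono (hμ : 0 < μ) {x y : ℝ} (hx : 0 ≤ x) (hxy : x ≤ y)
    (hPx : Tendsto (fun n : ℕ => μ^n * (L μ)^[n] x) atTop (nhds (Phi x)))
    (hPy : Tendsto (fun n : ℕ => μ^n * (L μ)^[n] y) atTop (nhds (Phi y))) :
    Phi x ≤ Phi y := by
  refine le_of_tendsto_of_tendsto' hPx hPy fun n => ?_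
  have := iter_mono hμ hx hxy n
  have hp : (0:ℝ) ≤ μ^n := by positivity
  exact mul_le_mul_of_nonneg_left this hp

lemma Phi_funeq (hμ : 0 < μ) {x : ℝ} (hx : 0 ≤ x) (m : ℕ)
    (hP : ∀ x : ℝ, 0 ≤ x →
      Tendsto (fun n : ℕ => μ^n * (L μ)^[n] x) atTop (nhds (Phi x))) :
    Phi x = μ^m * Phi ((L μ)^[m] x) := by
  have h1 := hP ((L μ)^[m] x) (iter_nonneg hμ hx m)
  have h2 : Tendsto (fun n : ℕ => μ^m * (μ^n * (L μ)^[n] ((L μ)^[m] x))) atTop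
      (nhds (μ^m * Phi ((L μ)^[m] x))) := h1.const_mul _
  have h3 : (fun n : ℕ => μ^m * (μ^n * (L μ)^[n] ((L μ)^[m] x)))
      = fun n : ℕ => μ^(n+m) * (L μ)^[n+m] x := by
    funext n
    rw [Function.iterate_add_apply, pow_add]
    ring
  rw [h3] at h2
  have h4 : Tendsto (fun n : ℕ => μ^(n+m) * (L μ)^[n+m] x) atTop (nhds (Phi x)) :=
    (hP x hx).comp (tendsto_add_atTop_nat m)
  exact tendsto_nhds_unique h4 h2

lemma Phi_pos (hμ : 1 < μ) {x : ℝ} (hx : 0 < x)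
    (hP : ∀ x : ℝ, 0 ≤ x →
      Tendsto (fun n : ℕ => μ^n * (L μ)^[n] x) atTop (nhds (Phi x))) :
    0 < Phi x := by
  have hμ0 : 0 < μ := lt_trans one_pos hμ
  obtain ⟨m, hm⟩ := pow_unbounded_of_one_lt (2*x) hμ
  set y := (L μ)^[m] x with hy
  have hy0 : 0 < y := iter_pos hμ0 hx m
  have hyle : y ≤ x / μ^m := iter_le hμ0 hx.le m
  have hpm : (0:ℝ) < μ^m := by positivity
  have hy2 : y ≤ 1/2 := by
    calc y ≤ x / μ^m := hyle
      _ ≤ 1/2 := by rw [div_le_iff₀ hpm]; nlinarith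
  have hlb := Phi_lb hμ hy0.le hy2 (hP y (iter_pos hμ0 hx m).le)
  have : Phi x = μ^m * Phi y := Phi_funeq hμ0 hx.le m hP
  rw [this]
  have : 0 < y * Real.exp (-(2*y/(μ-1))) := by positivity
  nlinarith

end Stmt5Aux
namespace Stmt5Aux

lemma L_eq {μ : ℝ} (hμ : 0 < μ) {u : ℝ} (hu : 0 ≤ u) : L μ u = Real.log (μ + u) - Real.log μ := by
  rw [L, ← Real.log_div (by positivity) (ne_of_gt hμ)]
  congr 1
  field_simp

lemma L_diff_le {μ1 μ2 : ℝ} (h1 : 0 < μ1) (h2 : 0 < μ2) (h12 : μ1 ≤ μ2) {u : ℝ} (hu : 0 ≤ u) :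
    0 ≤ L μ1 u - L μ2 u ∧ L μ1 u - L μ2 u ≤ Real.log μ2 - Real.log μ1 := by
  constructor
  · have : L μ2 u ≤ L μ1 u := by
      apply Real.log_le_log (by positivity)
      gcongr <;> first | linarith | exact hu
    linarith
  · rw [L_eq h1 hu, L_eq h2 hu]
    have : Real.log (μ1 + u) ≤ Real.log (μ2 + u) := by
      apply Real.log_le_log (by positivity); linarith
    linarith

lemma L_diff_abs {μ1 μ2 : ℝ} (h1 : 0 < μ1) (h2 : 0 < μ2) {u : ℝ} (hu : 0 ≤ u) :
    |L μ1 u - L μ2 u| ≤ |Real.log μ2 - Real.log μ1| := by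
  rcases le_total μ1 μ2 with h | h
  · obtain ⟨ha, hb⟩ := L_diff_le h1 h2 h hu
    have hl : Real.log μ1 ≤ Real.log μ2 := Real.log_le_log h1 h
    rw [abs_of_nonneg ha, abs_of_nonneg (by linarith)]
    exact hb
  · obtain ⟨ha, hb⟩ := L_diff_le h2 h1 h hu
    have hl : Real.log μ2 ≤ Real.log μ1 := Real.log_le_log h2 h
    rw [abs_sub_comm, abs_of_nonneg ha, abs_sub_comm, abs_of_nonneg (by linarith)]
    linarith

lemma L_lip {μ : ℝ} (hμ : 0 < μ) {u v : ℝ} (hu : 0 ≤ u) (hv : 0 ≤ v) :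
    |L μ u - L μ v| ≤ |u - v| / μ := by
  wlog h : v ≤ u generalizing u v
  · rw [abs_sub_comm, abs_sub_comm u v]
    exact this hv hu (by linarith)
  have hle : L μ v ≤ L μ u := L_mono hμ hv h
  rw [abs_of_nonneg (by linarith), abs_of_nonneg (by linarith)]
  rw [L_eq hμ hu, L_eq hμ hv]
  have key : Real.log (μ + u) - Real.log (μ + v) ≤ (u - v)/μ := by
    rw [← Real.log_div (by positivity) (by positivity)]
    have hlog := Real.log_le_sub_one_of_pos (show (0:ℝ) < (μ+u)/(μ+v) by positivity)
    have : (μ+u)/(μ+v) - 1 = (u-v)/(μ+v) := by field_simp; ring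
    have h2 : (u-v)/(μ+v) ≤ (u-v)/μ := by gcongr <;> linarith
    linarith
  linarith

lemma iter_diff {μ1 μ2 : ℝ} (h1 : 1 < μ1) (h2 : 0 < μ2) {x : ℝ} (hx : 0 ≤ x) (n : ℕ) :
    |(L μ1)^[n] x - (L μ2)^[n] x| ≤ μ1/(μ1-1) * |Real.log μ2 - Real.log μ1| := by
  have h10 : 0 < μ1 := lt_trans one_pos h1
  set d := |Real.log μ2 - Real.log μ1| with hd
  have hd0 : 0 ≤ d := abs_nonneg _
  set D := μ1/(μ1-1) * d with hD
  have hD0 : 0 ≤ D := by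
    apply mul_nonneg _ hd0
    apply div_nonneg h10.le; linarith
  induction n with
  | zero => simpa using hD0
  | succ n ih =>
    rw [Function.iterate_succ_apply', Function.iterate_succ_apply']
    set u := (L μ1)^[n] x
    set v := (L μ2)^[n] x
    have hu0 : 0 ≤ u := iter_nonneg h10 hx n
    have hv0 : 0 ≤ v := iter_nonneg h2 hx n
    have t1 : |L μ1 u - L μ1 v| ≤ |u - v| / μ1 := L_lip h10 hu0 hv0
    have t2 : |L μ1 v - L μ2 v| ≤ d := L_diff_abs h10 h2 hv0
    have t3 : |L μ1 u - L μ2 v| ≤ |u - v| / μ1 + d := by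
      calc |L μ1 u - L μ2 v| ≤ |L μ1 u - L μ1 v| + |L μ1 v - L μ2 v| := abs_sub_le _ _ _
        _ ≤ |u - v| / μ1 + d := add_le_add t1 t2
    have t4 : |u - v| / μ1 + d ≤ D / μ1 + d := by gcongr
    have t5 : D / μ1 + d = D := by
      have hne1 : μ1 ≠ 0 := ne_of_gt h10
      have hne2 : μ1 - 1 ≠ 0 := by linarith
      rw [hD]
      field_simp
      ring
    linarith
end Stmt5Aux


/-- Theorem 5.1: if `μ₁^{γ₁} = μ₂^{γ₂}` then the gauge functions
`h̃_{μᵢ,γᵢ}(t) = t² Φ̃_{μᵢ}(1/t)^{γᵢ}` are comparable near `0`, where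
`Φ̃_μ(x) = lim_n μ^n L_μ^n(x)` and `L_μ(x) = log(1 + x/μ)`. -/
theorem stmt_5 (mu1 mu2 : ℝ) (hmu1 : mu1 ∈ Set.Ioi 1) (hmu2 : mu2 ∈ Set.Ioi 1)
    (gamma1 gamma2 : ℝ) (hg1 : 0 < gamma1) (hg2 : 0 < gamma2)
    (hpow : mu1 ^ gamma1 = mu2 ^ gamma2)
    (Phi1 Phi2 : ℝ → ℝ)
    (hPhi1 : ∀ x : ℝ, 0 ≤ x →
      Tendsto (fun n : ℕ => mu1 ^ n * ((fun y => Real.log (1 + y / mu1))^[n] x))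
        atTop (nhds (Phi1 x)))
    (hPhi2 : ∀ x : ℝ, 0 ≤ x →
      Tendsto (fun n : ℕ => mu2 ^ n * ((fun y => Real.log (1 + y / mu2))^[n] x))
        atTop (nhds (Phi2 x))) :
    ∃ c > (0:ℝ), ∃ C > (0:ℝ), ∃ t0 > (0:ℝ), ∀ t : ℝ, 0 < t → t < t0 →
      c < (t ^ 2 * Phi1 (1 / t) ^ gamma1) / (t ^ 2 * Phi2 (1 / t) ^ gamma2) ∧
      (t ^ 2 * Phi1 (1 / t) ^ gamma1) / (t ^ 2 * Phi2 (1 / t) ^ gamma2) < C := by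
  
  open Stmt5Aux in
  have hm1 : (1:ℝ) < mu1 := hmu1
  have hm2 : (1:ℝ) < mu2 := hmu2
  have hm10 : (0:ℝ) < mu1 := lt_trans one_pos hm1
  have hm20 : (0:ℝ) < mu2 := lt_trans one_pos hm2
  have hP1 : ∀ x : ℝ, 0 ≤ x →
      Tendsto (fun n : ℕ => mu1 ^ n * ((Stmt5Aux.L mu1)^[n] x)) atTop (nhds (Phi1 x)) := hPhi1
  have hP2 : ∀ x : ℝ, 0 ≤ x →
      Tendsto (fun n : ℕ => mu2 ^ n * ((Stmt5Aux.L mu2)^[n] x)) atTop (nhds (Phi2 x)) := hPhi2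
  set d := |Real.log mu2 - Real.log mu1| with hd
  have hd0 : 0 ≤ d := abs_nonneg _
  set D := mu1/(mu1-1) * d with hD
  have hD0 : 0 ≤ D := mul_nonneg (div_nonneg hm10.le (by linarith)) hd0
  set b := mu2 * (Real.exp (D+1) - 1) with hb
  have hbpos : 0 < b := by
    have h := Real.add_one_le_exp (D+1)
    have : (1:ℝ) < Real.exp (D+1) := by nlinarith
    have : (0:ℝ) < Real.exp (D+1) - 1 := by linarith
    positivity
  have hLb : Stmt5Aux.L mu2 b = D + 1 := by
    show Real.log (1 + b / mu2) = D + 1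
    have he : 1 + b/mu2 = Real.exp (D+1) := by
      rw [hb]; field_simp; ring
    rw [he, Real.log_exp]
  have hb1 : (0:ℝ) < D + 1 := by linarith
  have m1pos : 0 < Phi1 1 := Stmt5Aux.Phi_pos hm1 one_pos hP1
  have m2pos : 0 < Phi2 (D+1) := Stmt5Aux.Phi_pos hm2 hb1 hP2
  have M1pos : 0 < Phi1 (b+D) := Stmt5Aux.Phi_pos hm1 (by linarith) hP1
  have M2pos : 0 < Phi2 b := Stmt5Aux.Phi_pos hm2 hbpos hP2
  set K := mu1 ^ gamma1 with hK
  have hKpos : 0 < K := Real.rpow_pos_of_pos hm10 _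
  set a1 := (Phi1 1) ^ gamma1 with ha1
  set A1 := (Phi1 (b+D)) ^ gamma1 with hA1
  set b1 := (Phi2 (D+1)) ^ gamma2 with hb1'
  set B1 := (Phi2 b) ^ gamma2 with hB1
  have a1pos : 0 < a1 := Real.rpow_pos_of_pos m1pos _
  have A1pos : 0 < A1 := Real.rpow_pos_of_pos M1pos _
  have b1pos : 0 < b1 := Real.rpow_pos_of_pos m2pos _
  have B1pos : 0 < B1 := Real.rpow_pos_of_pos M2pos _
  refine ⟨a1/B1/2, by positivity, 2*(A1/b1), by positivity, 1/b, by positivity, ?_⟩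
  intro t ht htlt
  set x := 1/t with hxdef
  have hx0 : 0 < x := by positivity
  have hxb : b < x := by
    rw [hxdef, lt_div_iff₀ ht]
    rw [lt_div_iff₀ hbpos] at htlt
    nlinarith
  -- find stopping time n
  have hex : ∃ n : ℕ, (Stmt5Aux.L mu2)^[n] x < b := by
    obtain ⟨n, hn⟩ := pow_unbounded_of_one_lt (x/b) hm2
    refine ⟨n, ?_⟩
    have h1 := Stmt5Aux.iter_le hm20 hx0.le n
    have hpn : (0:ℝ) < mu2^n := by positivity
    rw [div_lt_iff₀ hbpos] at hn
    calc (Stmt5Aux.L mu2)^[n] x ≤ x / mu2^n := h1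
      _ < b := by rw [div_lt_iff₀ hpn]; nlinarith
  set n := Nat.find hex with hn
  have hnspec : (Stmt5Aux.L mu2)^[n] x < b := Nat.find_spec hex
  have hn1 : n ≠ 0 := by
    intro h
    rw [h] at hnspec
    simp at hnspec
    linarith
  obtain ⟨k, hk⟩ : ∃ k, n = k + 1 := ⟨n-1, (Nat.succ_pred_eq_of_ne_zero hn1).symm⟩
  have hkmin : ¬ ((Stmt5Aux.L mu2)^[k] x < b) := Nat.find_min hex (by omega)
  push_neg at hkmin
  have hu2lb : D + 1 ≤ (Stmt5Aux.L mu2)^[n] x := by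
    rw [hk, Function.iterate_succ_apply', ← hLb]
    exact Stmt5Aux.L_mono hm20 hbpos.le hkmin
  set u2 := (Stmt5Aux.L mu2)^[n] x with hu2
  set u1 := (Stmt5Aux.L mu1)^[n] x with hu1
  have hdiff : |u1 - u2| ≤ D := Stmt5Aux.iter_diff hm1 hm20 hx0.le n
  have habs := abs_le.1 hdiff
  have hu1lb : 1 ≤ u1 := by linarith [habs.1]
  have hu1ub : u1 ≤ b + D := by linarith [habs.2]
  have e1 : Phi1 x = mu1^n * Phi1 u1 := Stmt5Aux.Phi_funeq hm10 hx0.le n hP1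
  have e2 : Phi2 x = mu2^n * Phi2 u2 := Stmt5Aux.Phi_funeq hm20 hx0.le n hP2
  have p1l : Phi1 1 ≤ Phi1 u1 :=
    Stmt5Aux.Phi_mono hm10 zero_le_one hu1lb (hP1 1 zero_le_one) (hP1 u1 (by linarith))
  have p1u : Phi1 u1 ≤ Phi1 (b+D) :=
    Stmt5Aux.Phi_mono hm10 (by linarith) hu1ub (hP1 u1 (by linarith)) (hP1 (b+D) (by linarith))
  have p2l : Phi2 (D+1) ≤ Phi2 u2 :=
    Stmt5Aux.Phi_mono hm20 hb1.le hu2lb (hP2 (D+1) hb1.le) (hP2 u2 (by linarith))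
  have p2u : Phi2 u2 ≤ Phi2 b :=
    Stmt5Aux.Phi_mono hm20 (by linarith) hnspec.le (hP2 u2 (by linarith)) (hP2 b hbpos.le)
  have q1pos : 0 < Phi1 u1 := lt_of_lt_of_le m1pos p1l
  have q2pos : 0 < Phi2 u2 := lt_of_lt_of_le m2pos p2l
  -- rpow cancellation
  have hr1 : Phi1 x ^ gamma1 = K^n * (Phi1 u1)^gamma1 := by
    rw [e1, Real.mul_rpow (by positivity) q1pos.le]
    congr 1
    rw [← Real.rpow_natCast mu1 n, ← Real.rpow_mul hm10.le, mul_comm,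
      Real.rpow_mul hm10.le, Real.rpow_natCast]
  have hKeq : K = mu2 ^ gamma2 := hpow
  have hr2 : Phi2 x ^ gamma2 = K^n * (Phi2 u2)^gamma2 := by
    rw [e2, Real.mul_rpow (by positivity) q2pos.le, hKeq]
    congr 1
    rw [← Real.rpow_natCast mu2 n, ← Real.rpow_mul hm20.le, mul_comm,
      Real.rpow_mul hm20.le, Real.rpow_natCast]
  have hKn : (0:ℝ) < K^n := pow_pos hKpos n
  have ht2 : (t:ℝ)^2 ≠ 0 := by positivity
  have hgoal : (t ^ 2 * Phi1 (1 / t) ^ gamma1) / (t ^ 2 * Phi2 (1 / t) ^ gamma2)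
      = (Phi1 u1)^gamma1 / (Phi2 u2)^gamma2 := by
    rw [mul_div_mul_left _ _ ht2, ← hxdef, hr1, hr2, mul_div_mul_left _ _ (ne_of_gt hKn)]
  rw [hgoal]
  have rX : a1 ≤ (Phi1 u1)^gamma1 := Real.rpow_le_rpow m1pos.le p1l hg1.le
  have rX' : (Phi1 u1)^gamma1 ≤ A1 := Real.rpow_le_rpow q1pos.le p1u hg1.le
  have rY : b1 ≤ (Phi2 u2)^gamma2 := Real.rpow_le_rpow m2pos.le p2l hg2.le
  have rY' : (Phi2 u2)^gamma2 ≤ B1 := Real.rpow_le_rpow q2pos.le p2u hg2.le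
  have qX : 0 < (Phi1 u1)^gamma1 := Real.rpow_pos_of_pos q1pos _
  have qY : 0 < (Phi2 u2)^gamma2 := Real.rpow_pos_of_pos q2pos _
  constructor
  · have hlow : a1/B1 ≤ (Phi1 u1)^gamma1 / (Phi2 u2)^gamma2 :=
      div_le_div₀ qX.le rX qY rY'
    have : 0 < a1/B1 := by positivity
    linarith
  · have hhigh : (Phi1 u1)^gamma1 / (Phi2 u2)^gamma2 ≤ A1/b1 :=
      div_le_div₀ A1pos.le rX' b1pos rY
    have : 0 < A1/b1 := by positivity
    linarith
end
end

section
/- Let λ1, λ2 ∈ (0, 1/e) and γ1, γ2 > 0 with β_{λ1}^{γ1} = β_{λ2}^{γ2}. Then there exist constants c, C > 0 and t0 > 0 such that c < h_{λ1,γ1}(t)/h_{λ2,γ2}(t) < C for all 0 < t < t0. -/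
open Filter Set

noncomputable section

namespace Stmt6

/-- One `log` step: stays above `β` and contracts toward `β`. -/
lemma step_bounds (lam β : ℝ) (hlam : 0 < lam) (hβ : 1 < β)
    (hfix : lam * Real.exp β = β) {x : ℝ} (hx : β ≤ x) :
    β ≤ Real.log (x / lam) ∧ Real.log (x / lam) - β ≤ (x - β) / β ∧
      (x - β) / x ≤ Real.log (x / lam) - β := by
  have hβ0 : (0:ℝ) < β := by linarith
  have hx0 : (0:ℝ) < x := lt_of_lt_of_le hβ0 hx
  have hlogβ : Real.log β = Real.log lam + β := by
    conv_lhs => rw [← hfix]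
    rw [Real.log_mul (ne_of_gt hlam) (Real.exp_pos β).ne', Real.log_exp]
  have hL : Real.log (x / lam) = Real.log x - Real.log lam :=
    Real.log_div hx0.ne' hlam.ne'
  have hsub : Real.log (x / lam) - β = Real.log x - Real.log β := by
    rw [hL, hlogβ]; ring
  have h1 : Real.log x - Real.log β ≤ (x - β) / β := by
    have := Real.log_le_sub_one_of_pos (show (0:ℝ) < x / β from div_pos hx0 hβ0)
    rw [Real.log_div hx0.ne' hβ0.ne'] at this
    have : Real.log x - Real.log β ≤ x / β - 1 := this
    rw [div_sub' hβ0.ne'] at this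
    simpa [mul_one] using this
  have h2 : (x - β) / x ≤ Real.log x - Real.log β := by
    have := Real.log_le_sub_one_of_pos (show (0:ℝ) < β / x from div_pos hβ0 hx0)
    rw [Real.log_div hβ0.ne' hx0.ne'] at this
    have h' : Real.log β - Real.log x ≤ β / x - 1 := this
    have : β / x - 1 = -((x - β)/x) := by field_simp; ring
    rw [this] at h'
    linarith
  refine ⟨?_, by rw [hsub]; exact h1, by rw [hsub]; exact h2⟩
  have hlog : Real.log β ≤ Real.log x := Real.log_le_log hβ0 hx
  have : (x - β)/x ≥ 0 := div_nonneg (by linarith) hx0.le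
  linarith [hsub, h2]

/-- Iterated bounds: `β ≤ L^[n] x` and `L^[n] x - β ≤ (x-β)/β^n`. -/
lemma iter_bounds (lam β : ℝ) (hlam : 0 < lam) (hβ : 1 < β)
    (hfix : lam * Real.exp β = β) {x : ℝ} (hx : β ≤ x) (n : ℕ) :
    β ≤ (fun y => Real.log (y / lam))^[n] x ∧
      (fun y => Real.log (y / lam))^[n] x - β ≤ (x - β) / β ^ n := by
  have hβ0 : (0:ℝ) < β := by linarith
  induction n with
  | zero => simpa using by linarith
  | succ n ih =>
    obtain ⟨h1, h2⟩ := ih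
    rw [Function.iterate_succ_apply']
    obtain ⟨g1, g2, _⟩ := step_bounds lam β hlam hβ hfix h1
    refine ⟨g1, ?_⟩
    have hβn : (0:ℝ) < β ^ n := pow_pos hβ0 n
    calc Real.log ((fun y => Real.log (y / lam))^[n] x / lam) - β
        ≤ ((fun y => Real.log (y / lam))^[n] x - β) / β := g2
      _ ≤ ((x - β) / β ^ n) / β := by
          gcongr
      _ = (x - β) / β ^ (n+1) := by rw [pow_succ]; ring

/-- geometric sum bound -/
lemma geom_helper {r : ℝ} (h0 : 0 ≤ r) (h1 : r < 1) (n : ℕ) :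
    ∑ i ∈ Finset.range n, r ^ i ≤ (1 - r)⁻¹ := by
  rw [geom_sum_eq h1.ne n]
  rw [div_eq_mul_inv, ← neg_mul_neg, neg_sub, neg_inv, neg_sub]
  have hrn : 0 ≤ r ^ n := pow_nonneg h0 n
  have : (0:ℝ) < (1 - r)⁻¹ := inv_pos.2 (by linarith)
  nlinarith

/-- `Phi x = β ^ n * Phi (L^[n] x)` for `x ≥ β`. -/
lemma Phi_shift (lam β : ℝ) (hlam : 0 < lam) (hβ : 1 < β)
    (hfix : lam * Real.exp β = β) (Phi : ℝ → ℝ)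
    (hPhi : ∀ x : ℝ, β ≤ x →
      Tendsto (fun n : ℕ => β ^ n * ((fun y => Real.log (y / lam))^[n] x - β))
        atTop (nhds (Phi x)))
    {x : ℝ} (hx : β ≤ x) (n : ℕ) :
    Phi x = β ^ n * Phi ((fun y => Real.log (y / lam))^[n] x) := by
  set f : ℝ → ℝ := fun y => Real.log (y / lam) with hf
  have hfn : β ≤ f^[n] x := (iter_bounds lam β hlam hβ hfix hx n).1
  have t1 : Tendsto (fun m : ℕ => β ^ (m + n) * (f^[m + n] x - β)) atTop (nhds (Phi x)) :=
    (hPhi x hx).comp (tendsto_add_atTop_nat n)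
  have t2 : Tendsto (fun m : ℕ => β ^ n * (β ^ m * (f^[m] (f^[n] x) - β))) atTop
      (nhds (β ^ n * Phi (f^[n] x))) := (hPhi _ hfn).const_mul _
  have heq : (fun m : ℕ => β ^ (m + n) * (f^[m + n] x - β)) =
      fun m : ℕ => β ^ n * (β ^ m * (f^[m] (f^[n] x) - β)) := by
    funext m
    rw [Function.iterate_add_apply, pow_add]
    ring
  rw [heq] at t1
  exact tendsto_nhds_unique t1 t2

/-- Upper bound: `Phi x ≤ x - β` and `0 ≤ Phi x` for `x ≥ β`. -/
lemma Phi_upper (lam β : ℝ) (hlam : 0 < lam) (hβ : 1 < β)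
    (hfix : lam * Real.exp β = β) (Phi : ℝ → ℝ)
    (hPhi : ∀ x : ℝ, β ≤ x →
      Tendsto (fun n : ℕ => β ^ n * ((fun y => Real.log (y / lam))^[n] x - β))
        atTop (nhds (Phi x)))
    {x : ℝ} (hx : β ≤ x) : 0 ≤ Phi x ∧ Phi x ≤ x - β := by
  have hβ0 : (0:ℝ) < β := by linarith
  constructor
  · refine ge_of_tendsto' (hPhi x hx) fun m => ?_
    have := (iter_bounds lam β hlam hβ hfix hx m).1
    have : (0:ℝ) ≤ (fun y => Real.log (y / lam))^[m] x - β := by linarith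
    positivity
  · refine le_of_tendsto' (hPhi x hx) fun m => ?_
    obtain ⟨h1, h2⟩ := iter_bounds lam β hlam hβ hfix hx m
    have hβm : (0:ℝ) < β ^ m := pow_pos hβ0 m
    calc β ^ m * ((fun y => Real.log (y / lam))^[m] x - β)
        ≤ β ^ m * ((x - β) / β ^ m) := by
          apply mul_le_mul_of_nonneg_left h2 hβm.le
      _ = x - β := by field_simp

/-- Lower bound on the fundamental domain: for `β ≤ x ≤ β + ε`,
`Phi x ≥ (x - β) - ε² β/(β-1)`. -/
lemma Phi_lower (lam β : ℝ) (hlam : 0 < lam) (hβ : 1 < β)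
    (hfix : lam * Real.exp β = β) (Phi : ℝ → ℝ)
    (hPhi : ∀ x : ℝ, β ≤ x →
      Tendsto (fun n : ℕ => β ^ n * ((fun y => Real.log (y / lam))^[n] x - β))
        atTop (nhds (Phi x)))
    {ε x : ℝ} (hε : 0 < ε) (hx : β ≤ x) (hx2 : x ≤ β + ε) :
    (x - β) - ε ^ 2 * (β / (β - 1)) ≤ Phi x := by
  set f : ℝ → ℝ := fun y => Real.log (y / lam) with hf
  have hβ0 : (0:ℝ) < β := by linarith
  set g : ℕ → ℝ := fun m => β ^ m * (f^[m] x - β) with hg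
  -- one-step estimate
  have step : ∀ m : ℕ, g m - ε ^ 2 * (1/β) ^ m ≤ g (m+1) := by
    intro m
    set a : ℝ := β ^ m with ha
    have ha0 : (0:ℝ) < a := pow_pos hβ0 m
    obtain ⟨h1, h2⟩ := iter_bounds lam β hlam hβ hfix hx m
    clear_value a
    set u : ℝ := f^[m] x - β with hu
    have hfm : f^[m] x = β + u := by simp [hu]
    clear_value u
    have hu0 : (0:ℝ) ≤ u := by rw [hfm] at h1; linarith
    rw [← ha] at h2
    have hau : a * u ≤ ε := by
      have h3 : a * u ≤ a * ((x - β) / a) := mul_le_mul_of_nonneg_left h2 ha0.le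
      have h4 : a * ((x - β) / a) = x - β := by field_simp
      linarith
    have hgm1 : a * β * (u / (β + u)) ≤ g (m+1) := by
      have hstep := (step_bounds lam β hlam hβ hfix h1).2.2
      have hfsucc : f^[m+1] x = f (f^[m] x) := Function.iterate_succ_apply' f m x
      have h3' : (f^[m] x - β) / f^[m] x ≤ f^[m+1] x - β := by rw [hfsucc]; exact hstep
      have h4 : u / (β + u) ≤ f^[m+1] x - β := by
        rw [hfm] at h3'
        simpa using h3'
      have : g (m+1) = a * β * (f^[m+1] x - β) := by
        simp only [hg, ha, pow_succ]; try ring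
      rw [this]
      have : (0:ℝ) < a * β := by positivity
      nlinarith [h4]
    have hdiff : a * u - a * β * (u / (β + u)) ≤ ε ^ 2 * (1/β) ^ m := by
      have hbu : (0:ℝ) < β + u := by linarith
      have heq : a * u - a * β * (u / (β + u)) = a * u ^ 2 / (β + u) := by
        field_simp; ring
      rw [heq]
      have h5 : a * u ^ 2 / (β + u) ≤ a * u ^ 2 := by
        apply div_le_self (by positivity) (by linarith)
      have h6 : a * u ^ 2 ≤ ε ^ 2 * (1/β) ^ m := by
        have h7 : (a * u) ^ 2 ≤ ε ^ 2 := pow_le_pow_left₀ (by positivity) hau 2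
        have h8 : (1/β) ^ m = 1 / a := by rw [ha, div_pow, one_pow]
        rw [h8, mul_one_div, le_div_iff₀ ha0]
        calc a * u ^ 2 * a = (a * u) ^ 2 := by ring
          _ ≤ ε ^ 2 := h7
      linarith
    have hgm : g m = a * u := by rw [hg]; simp only [hfm, ha]; ring
    calc g m - ε ^ 2 * (1/β) ^ m ≤ a * β * (u / (β + u)) := by rw [hgm]; linarith
      _ ≤ g (m+1) := hgm1
  -- induction
  have main : ∀ m : ℕ, (x - β) - ε ^ 2 * ∑ k ∈ Finset.range m, (1/β) ^ k ≤ g m := by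
    intro m
    induction m with
    | zero => simp [hg]
    | succ m ih =>
      have := step m
      rw [Finset.sum_range_succ]
      linarith
  have hsum : ∀ m : ℕ, ∑ k ∈ Finset.range m, (1/β:ℝ) ^ k ≤ β / (β - 1) := by
    intro m
    have h1 : (0:ℝ) ≤ 1/β := by positivity
    have h2 : (1/β:ℝ) < 1 := by rw [div_lt_one hβ0]; exact hβ
    have := geom_helper h1 h2 m
    have heq : (1 - 1/β:ℝ)⁻¹ = β / (β - 1) := by
      rw [show (1 - 1/β : ℝ) = (β-1)/β by field_simp, inv_div]
    linarith [heq ▸ this]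
  refine ge_of_tendsto' (hPhi x hx) fun m => ?_
  have h8 : ε ^ 2 * ∑ k ∈ Finset.range m, (1/β:ℝ) ^ k ≤ ε ^ 2 * (β / (β - 1)) :=
    mul_le_mul_of_nonneg_left (hsum m) (by positivity)
  have := main m
  simp only [hg] at this
  linarith

def eps (β : ℝ) : ℝ := (β - 1) / (8 * β ^ 2)
def c0 (β : ℝ) : ℝ := (β - 1) / (32 * β ^ 3)

lemma eps_pos {β : ℝ} (hβ : 1 < β) : 0 < eps β := by
  unfold eps; apply div_pos (by linarith) (by nlinarith)

lemma eps_lt_beta {β : ℝ} (hβ : 1 < β) : eps β < β := by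
  unfold eps
  rw [div_lt_iff₀ (by positivity)]
  nlinarith

lemma c0_pos {β : ℝ} (hβ : 1 < β) : 0 < c0 β := by
  unfold c0
  exact div_pos (by linarith) (mul_pos (by norm_num) (pow_pos (by linarith) 3))

/-- Key per-λ estimate: if `L^[n+1] x ≤ β + ε < L^[n] x`, then
`β^(n+1) c0 ≤ Phi x ≤ β^(n+1) ε`. -/
lemma key (lam β : ℝ) (hlam : 0 < lam) (hβ : 1 < β)
    (hfix : lam * Real.exp β = β) (Phi : ℝ → ℝ)
    (hPhi : ∀ x : ℝ, β ≤ x →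
      Tendsto (fun n : ℕ => β ^ n * ((fun y => Real.log (y / lam))^[n] x - β))
        atTop (nhds (Phi x)))
    {x : ℝ} (hx : β ≤ x) {n : ℕ}
    (h1 : (fun y => Real.log (y / lam))^[n+1] x ≤ β + eps β)
    (h2 : β + eps β < (fun y => Real.log (y / lam))^[n] x) :
    β ^ (n+1) * c0 β ≤ Phi x ∧ Phi x ≤ β ^ (n+1) * eps β := by
  set f : ℝ → ℝ := fun y => Real.log (y / lam) with hf
  have hβ0 : (0:ℝ) < β := by linarith
  have hβ1 : (0:ℝ) < β - 1 := by linarith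
  have hε : 0 < eps β := eps_pos hβ
  have hεβ : eps β < β := eps_lt_beta hβ
  set z : ℝ := f^[n] x with hz
  set y : ℝ := f^[n+1] x with hy
  have hyz : y = f z := by rw [hy, hz, Function.iterate_succ_apply']
  have hzβ : β ≤ z := (iter_bounds lam β hlam hβ hfix hx n).1
  obtain ⟨hyβ, _, hylow⟩ := step_bounds lam β hlam hβ hfix hzβ
  have hyz' : y = Real.log (z / lam) := hyz
  rw [← hyz'] at hyβ hylow
  -- lower bound on y - β
  have hz0 : (0:ℝ) < z := by linarith
  have hylow2 : eps β / (2 * β) ≤ y - β := by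
    refine le_trans ?_ hylow
    rw [div_le_div_iff₀ (by positivity) hz0]
    nlinarith [h2]
  -- Phi bounds at y
  have hPy_low : c0 β ≤ Phi y := by
    have := Phi_lower lam β hlam hβ hfix Phi hPhi hε hyβ (by linarith : y ≤ β + eps β)
    have heq : (eps β) ^ 2 * (β / (β - 1)) = eps β / (8 * β) := by
      unfold eps; field_simp
    have hc0 : c0 β = eps β / (4 * β) := by
      unfold c0 eps; rw [div_div]; congr 1; ring
    rw [heq] at this
    rw [hc0]
    have h8 : eps β / (8 * β) ≤ (eps β / (2 * β)) / 4 := by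
      rw [div_le_div_iff₀ (by positivity) (by norm_num)]
      rw [div_mul_eq_mul_div, le_div_iff₀ (by positivity)]
      ring_nf
      nlinarith [hε, hβ0]
    have h9 : eps β / (4 * β) ≤ eps β / (2 * β) - eps β / (8 * β) := by
      rw [div_sub_div _ _ (by positivity : (2:ℝ)*β ≠ 0) (by positivity : (8:ℝ)*β ≠ 0)]
      rw [div_le_div_iff₀ (by positivity) (by positivity)]
      ring_nf
      nlinarith [hε, hβ0]
    linarith
  have hPy_up : Phi y ≤ eps β := by
    have := (Phi_upper lam β hlam hβ hfix Phi hPhi hyβ).2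
    linarith
  -- shift
  have hshift := Phi_shift lam β hlam hβ hfix Phi hPhi hx (n+1)
  rw [← hy] at hshift
  have hβn : (0:ℝ) < β ^ (n+1) := pow_pos hβ0 _
  constructor
  · rw [hshift]; exact mul_le_mul_of_nonneg_left hPy_low hβn.le
  · rw [hshift]; exact mul_le_mul_of_nonneg_left hPy_up hβn.le

lemma log_lip {μ a b : ℝ} (hμ : 1 < μ) (ha : μ ≤ a) (hb : μ ≤ b) :
    |Real.log a - Real.log b| ≤ |a - b| / μ := by
  have hμ0 : (0:ℝ) < μ := by linarith
  have key : ∀ u v : ℝ, μ ≤ u → μ ≤ v → u ≤ v →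
      Real.log v - Real.log u ≤ (v - u) / μ := by
    intro u v hu hv huv
    have hu0 : (0:ℝ) < u := by linarith
    have hv0 : (0:ℝ) < v := by linarith
    have := Real.log_le_sub_one_of_pos (show (0:ℝ) < v / u from div_pos hv0 hu0)
    rw [Real.log_div hv0.ne' hu0.ne'] at this
    have h1 : Real.log v - Real.log u ≤ (v - u) / u := by
      rw [div_sub' hu0.ne'] at this
      simpa [mul_one] using this
    have h2 : (v - u) / u ≤ (v - u) / μ := by
      apply div_le_div_of_nonneg_left (by linarith) hμ0 ?_ |>.trans_eq rfl
      exact hu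
    linarith
  rcases le_total a b with h | h
  · have hlog := Real.log_le_log (by linarith : (0:ℝ) < a) h
    have h1 : |Real.log a - Real.log b| = Real.log b - Real.log a := by
      rw [abs_sub_comm]; exact abs_of_nonneg (by linarith)
    have h2 : |a - b| = b - a := by
      rw [abs_sub_comm]; exact abs_of_nonneg (by linarith)
    rw [h1, h2]; exact key a b ha hb h
  · have hlog := Real.log_le_log (by linarith : (0:ℝ) < b) h
    have h1 : |Real.log a - Real.log b| = Real.log a - Real.log b :=
      abs_of_nonneg (by linarith)
    have h2 : |a - b| = a - b := abs_of_nonneg (by linarith)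
    rw [h1, h2]; exact key b a hb ha h

/-- The two iterated-log orbits stay a bounded distance apart. -/
lemma diff_bound (lam1 lam2 β1 β2 : ℝ) (hlam1 : 0 < lam1) (hlam2 : 0 < lam2)
    (hβ1 : 1 < β1) (hβ2 : 1 < β2)
    (hfix1 : lam1 * Real.exp β1 = β1) (hfix2 : lam2 * Real.exp β2 = β2)
    {x : ℝ} (hx1 : β1 ≤ x) (hx2 : β2 ≤ x) (n : ℕ) :
    |(fun y => Real.log (y / lam1))^[n] x - (fun y => Real.log (y / lam2))^[n] x| ≤
      |Real.log lam1 - Real.log lam2| * (min β1 β2 / (min β1 β2 - 1)) := by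
  set μ : ℝ := min β1 β2 with hμdef
  have hμ : 1 < μ := lt_min hβ1 hβ2
  have hμ0 : (0:ℝ) < μ := by linarith
  set c : ℝ := |Real.log lam1 - Real.log lam2| with hc
  have hc0 : 0 ≤ c := abs_nonneg _
  set D : ℝ := c * (μ / (μ - 1)) with hD
  have hμne : μ ≠ 0 := by linarith
  have hμ1ne : μ - 1 ≠ 0 := by linarith
  have hD0 : 0 ≤ D := mul_nonneg hc0 (div_nonneg (by linarith) (by linarith))
  have hDeq : D / μ + c = D := by
    rw [hD]
    field_simp
    ring
  induction n with
  | zero => simpa using hD0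
  | succ n ih =>
    set a : ℝ := (fun y => Real.log (y / lam1))^[n] x with hadef
    set b : ℝ := (fun y => Real.log (y / lam2))^[n] x with hbdef
    have haβ : β1 ≤ a := (iter_bounds lam1 β1 hlam1 hβ1 hfix1 hx1 n).1
    have hbβ : β2 ≤ b := (iter_bounds lam2 β2 hlam2 hβ2 hfix2 hx2 n).1
    have ha0 : (0:ℝ) < a := by linarith
    have hb0 : (0:ℝ) < b := by linarith
    have hstep1 : (fun y => Real.log (y / lam1))^[n+1] x = Real.log a - Real.log lam1 := by
      rw [Function.iterate_succ_apply', ← hadef]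
      exact Real.log_div ha0.ne' hlam1.ne'
    have hstep2 : (fun y => Real.log (y / lam2))^[n+1] x = Real.log b - Real.log lam2 := by
      rw [Function.iterate_succ_apply', ← hbdef]
      exact Real.log_div hb0.ne' hlam2.ne'
    rw [hstep1, hstep2]
    have hlip : |Real.log a - Real.log b| ≤ |a - b| / μ :=
      log_lip hμ (le_trans (min_le_left _ _) haβ) (le_trans (min_le_right _ _) hbβ)
    have habD : |a - b| / μ ≤ D / μ := by gcongr
    calc |Real.log a - Real.log lam1 - (Real.log b - Real.log lam2)|
        = |(Real.log a - Real.log b) + (Real.log lam2 - Real.log lam1)| := by congr 1; ring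
      _ ≤ |Real.log a - Real.log b| + |Real.log lam2 - Real.log lam1| := abs_add_le _ _
      _ = |Real.log a - Real.log b| + c := by rw [hc, abs_sub_comm (Real.log lam2)]
      _ ≤ D / μ + c := by linarith [hlip.trans habD]
      _ = D := hDeq

lemma exists_entry (lam β : ℝ) (hlam : 0 < lam) (hβ : 1 < β)
    (hfix : lam * Real.exp β = β) {x : ℝ} (hx : β ≤ x) :
    ∃ n : ℕ, (fun y => Real.log (y / lam))^[n] x ≤ β + eps β := by
  obtain ⟨n, hn⟩ := pow_unbounded_of_one_lt ((x - β) / eps β) hβ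
  have hε := eps_pos hβ
  have hβn : (0:ℝ) < β ^ n := pow_pos (by linarith) n
  refine ⟨n, ?_⟩
  have h2 := (iter_bounds lam β hlam hβ hfix hx n).2
  have h3 : (x - β) / β ^ n ≤ eps β := by
    rw [div_le_iff₀ hβn]
    rw [div_lt_iff₀ hε] at hn
    nlinarith
  linarith

lemma compare (lam1 lam2 β1 β2 : ℝ) (hlam1 : 0 < lam1) (hlam2 : 0 < lam2)
    (hβ1 : 1 < β1) (hβ2 : 1 < β2)
    (hfix1 : lam1 * Real.exp β1 = β1) (hfix2 : lam2 * Real.exp β2 = β2) :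
    ∃ K : ℕ, ∀ x : ℝ, β1 ≤ x → β2 ≤ x → ∀ n m : ℕ,
      (fun y => Real.log (y / lam2))^[m] x ≤ β2 + eps β2 →
      (∀ k, k < n → β1 + eps β1 < (fun y => Real.log (y / lam1))^[k] x) →
      n ≤ m + K := by
  set D : ℝ := |Real.log lam1 - Real.log lam2| * (min β1 β2 / (min β1 β2 - 1)) with hDdef
  have hμ : (1:ℝ) < min β1 β2 := lt_min hβ1 hβ2
  have hD0 : 0 ≤ D :=
    mul_nonneg (abs_nonneg _) (div_nonneg (by linarith) (by linarith))
  set M : ℝ := β2 + eps β2 + D with hM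
  have hε1 := eps_pos hβ1
  have hε2 := eps_pos hβ2
  obtain ⟨K, hK⟩ := pow_unbounded_of_one_lt (M / eps β1) hβ1
  refine ⟨K, fun x hx1 hx2 n m hm hmin => ?_⟩
  by_contra hcon
  push_neg at hcon
  have hlt : m + K < n := hcon
  have hbig := hmin (m + K) hlt
  set w : ℝ := (fun y => Real.log (y / lam1))^[m] x with hw
  have hwβ : β1 ≤ w := (iter_bounds lam1 β1 hlam1 hβ1 hfix1 hx1 m).1
  have hdiff := diff_bound lam1 lam2 β1 β2 hlam1 hlam2 hβ1 hβ2 hfix1 hfix2 hx1 hx2 m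
  have hwM : w ≤ M := by
    have h1 : w - (fun y => Real.log (y / lam2))^[m] x ≤ D :=
      le_trans (le_abs_self _) hdiff
    rw [hM]
    linarith
  have hsplit : (fun y => Real.log (y / lam1))^[m + K] x =
      (fun y => Real.log (y / lam1))^[K] w := by
    rw [add_comm, Function.iterate_add_apply]
  have h2 := (iter_bounds lam1 β1 hlam1 hβ1 hfix1 hwβ K).2
  have hβK : (0:ℝ) < β1 ^ K := pow_pos (by linarith) K
  have h3 : (w - β1) / β1 ^ K < eps β1 := by
    rw [div_lt_iff₀ hβK]
    rw [div_lt_iff₀ hε1] at hK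
    nlinarith
  rw [hsplit] at hbig
  linarith

lemma pow_rpow_comm {b : ℝ} (hb : 0 ≤ b) (n : ℕ) (γ : ℝ) :
    (b ^ n) ^ γ = (b ^ γ) ^ n := by
  rw [← Real.rpow_natCast b n, ← Real.rpow_mul hb, mul_comm,
    Real.rpow_mul hb, Real.rpow_natCast]

end Stmt6

open Stmt6

/-- Corollary 5.2: if `λ₁, λ₂ ∈ (0,1/e)` and `β_{λ₁}^{γ₁} = β_{λ₂}^{γ₂}`,
then the gauge functions `h_{λᵢ,γᵢ}(t) = t² Φ_{λᵢ}(1/t)^{γᵢ}` are comparable near `0`. -/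
theorem stmt_6 (lam1 lam2 : ℝ)
    (hlam1 : lam1 ∈ Set.Ioo 0 (1 / Real.exp 1)) (hlam2 : lam2 ∈ Set.Ioo 0 (1 / Real.exp 1))
    (beta1 beta2 : ℝ) (hbeta1 : 1 < beta1) (hbeta2 : 1 < beta2)
    (hfix1 : lam1 * Real.exp beta1 = beta1) (hfix2 : lam2 * Real.exp beta2 = beta2)
    (gamma1 gamma2 : ℝ) (hg1 : 0 < gamma1) (hg2 : 0 < gamma2)
    (hpow : beta1 ^ gamma1 = beta2 ^ gamma2)
    (Phi1 Phi2 : ℝ → ℝ)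
    (hPhi1 : ∀ x : ℝ, beta1 ≤ x →
      Tendsto (fun n : ℕ => beta1 ^ n * ((fun y => Real.log (y / lam1))^[n] x - beta1))
        atTop (nhds (Phi1 x)))
    (hPhi2 : ∀ x : ℝ, beta2 ≤ x →
      Tendsto (fun n : ℕ => beta2 ^ n * ((fun y => Real.log (y / lam2))^[n] x - beta2))
        atTop (nhds (Phi2 x))) :
    ∃ c > (0:ℝ), ∃ C > (0:ℝ), ∃ t0 > (0:ℝ), ∀ t : ℝ, 0 < t → t < t0 →
      c < (t ^ 2 * Phi1 (1 / t) ^ gamma1) / (t ^ 2 * Phi2 (1 / t) ^ gamma2) ∧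
      (t ^ 2 * Phi1 (1 / t) ^ gamma1) / (t ^ 2 * Phi2 (1 / t) ^ gamma2) < C := by
  obtain ⟨hl1, -⟩ := hlam1
  obtain ⟨hl2, -⟩ := hlam2
  have hb10 : (0:ℝ) < beta1 := by linarith
  have hb20 : (0:ℝ) < beta2 := by linarith
  set ε1 : ℝ := eps beta1 with hε1def
  set ε2 : ℝ := eps beta2 with hε2def
  have hε1 : 0 < ε1 := eps_pos hbeta1
  have hε2 : 0 < ε2 := eps_pos hbeta2
  have hc01 : 0 < c0 beta1 := c0_pos hbeta1
  have hc02 : 0 < c0 beta2 := c0_pos hbeta2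
  set B : ℝ := beta1 ^ gamma1 with hBdef
  have hpow' : beta1 ^ gamma1 = beta2 ^ gamma2 := hBdef.symm.trans hpow
  have hB1 : 1 < B := Real.one_lt_rpow hbeta1 hg1
  have hB0 : 0 < B := by linarith
  obtain ⟨K1, hK1⟩ := compare lam1 lam2 beta1 beta2 hl1 hl2 hbeta1 hbeta2 hfix1 hfix2
  obtain ⟨K2, hK2⟩ := compare lam2 lam1 beta2 beta1 hl2 hl1 hbeta2 hbeta1 hfix2 hfix1
  -- the constants
  set cLow : ℝ := c0 beta1 ^ gamma1 / (B ^ K2 * ε2 ^ gamma2) with hcLow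
  set cUpp : ℝ := B ^ K1 * ε1 ^ gamma1 / c0 beta2 ^ gamma2 with hcUpp
  have hcLow0 : 0 < cLow := by
    apply div_pos (Real.rpow_pos_of_pos hc01 _)
    exact mul_pos (pow_pos hB0 _) (Real.rpow_pos_of_pos hε2 _)
  have hcUpp0 : 0 < cUpp := by
    apply div_pos (mul_pos (pow_pos hB0 _) (Real.rpow_pos_of_pos hε1 _))
    exact Real.rpow_pos_of_pos hc02 _
  set X0 : ℝ := max (beta1 + ε1) (beta2 + ε2) + 1 with hX0
  have hX0pos : 0 < X0 := by
    have := le_max_left (beta1 + ε1) (beta2 + ε2)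
    rw [hX0]
    nlinarith [hε1]
  clear_value X0
  refine ⟨cLow / 2, by positivity, 2 * cUpp, by positivity, 1 / X0, by positivity,
    fun t ht ht0 => ?_⟩
  set x : ℝ := 1 / t with hxdef
  have hxX0 : X0 < x := by
    rw [hxdef, lt_div_iff₀ ht]
    have h := mul_lt_mul_of_pos_left ht0 hX0pos
    have h2 : X0 * (1 / X0) = 1 := by field_simp
    linarith
  have hx1 : beta1 + ε1 < x := by
    have := le_max_left (beta1 + ε1) (beta2 + ε2)
    rw [hX0] at hxX0; linarith
  have hx2 : beta2 + ε2 < x := by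
    have := le_max_right (beta1 + ε1) (beta2 + ε2)
    rw [hX0] at hxX0; linarith
  have hxβ1 : beta1 ≤ x := by linarith
  have hxβ2 : beta2 ≤ x := by linarith
  -- entry times
  have hex1 := exists_entry lam1 beta1 hl1 hbeta1 hfix1 hxβ1
  have hex2 := exists_entry lam2 beta2 hl2 hbeta2 hfix2 hxβ2
  set N1 : ℕ := Nat.find hex1 with hN1def
  set N2 : ℕ := Nat.find hex2 with hN2def
  have hspec1 : (fun y => Real.log (y / lam1))^[N1] x ≤ beta1 + ε1 := Nat.find_spec hex1
  have hspec2 : (fun y => Real.log (y / lam2))^[N2] x ≤ beta2 + ε2 := Nat.find_spec hex2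
  have hmin1 : ∀ k, k < N1 → beta1 + ε1 < (fun y => Real.log (y / lam1))^[k] x :=
    fun k hk => not_le.mp (Nat.find_min hex1 hk)
  have hmin2 : ∀ k, k < N2 → beta2 + ε2 < (fun y => Real.log (y / lam2))^[k] x :=
    fun k hk => not_le.mp (Nat.find_min hex2 hk)
  have hN1pos : N1 ≠ 0 := by
    intro h
    rw [h] at hspec1
    simp at hspec1
    linarith
  have hN2pos : N2 ≠ 0 := by
    intro h
    rw [h] at hspec2
    simp at hspec2
    linarith
  obtain ⟨n1, hn1⟩ := Nat.exists_eq_succ_of_ne_zero hN1pos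
  obtain ⟨n2, hn2⟩ := Nat.exists_eq_succ_of_ne_zero hN2pos
  -- Phi bounds
  have hbnd1 := key lam1 beta1 hl1 hbeta1 hfix1 Phi1 hPhi1 hxβ1
    (by rw [← Nat.succ_eq_add_one, ← hn1]; exact hspec1)
    (hmin1 n1 (by omega))
  have hbnd2 := key lam2 beta2 hl2 hbeta2 hfix2 Phi2 hPhi2 hxβ2
    (by rw [← Nat.succ_eq_add_one, ← hn2]; exact hspec2)
    (hmin2 n2 (by omega))
  rw [← Nat.succ_eq_add_one, ← hn1] at hbnd1
  rw [← Nat.succ_eq_add_one, ← hn2] at hbnd2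
  obtain ⟨hP1low, hP1up⟩ := hbnd1
  obtain ⟨hP2low, hP2up⟩ := hbnd2
  have hβN1 : (0:ℝ) < beta1 ^ N1 := pow_pos hb10 _
  have hβN2 : (0:ℝ) < beta2 ^ N2 := pow_pos hb20 _
  have hP1pos : 0 < Phi1 x := lt_of_lt_of_le (by positivity) hP1low
  have hP2pos : 0 < Phi2 x := lt_of_lt_of_le (by positivity) hP2low
  -- comparisons of entry times
  have hN1N2 : N1 ≤ N2 + K1 := hK1 x hxβ1 hxβ2 N1 N2 hspec2 hmin1
  have hN2N1 : N2 ≤ N1 + K2 := hK2 x hxβ2 hxβ1 N2 N1 hspec1 hmin2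
  -- rpow bounds
  have hA1low : B ^ N1 * c0 beta1 ^ gamma1 ≤ Phi1 x ^ gamma1 := by
    calc B ^ N1 * c0 beta1 ^ gamma1 = (beta1 ^ N1 * c0 beta1) ^ gamma1 := by
          rw [Real.mul_rpow hβN1.le hc01.le, pow_rpow_comm hb10.le]
      _ ≤ Phi1 x ^ gamma1 := Real.rpow_le_rpow (by positivity) hP1low hg1.le
  have hA1up : Phi1 x ^ gamma1 ≤ B ^ N1 * ε1 ^ gamma1 := by
    calc Phi1 x ^ gamma1 ≤ (beta1 ^ N1 * ε1) ^ gamma1 :=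
          Real.rpow_le_rpow hP1pos.le hP1up hg1.le
      _ = B ^ N1 * ε1 ^ gamma1 := by
          rw [Real.mul_rpow hβN1.le hε1.le, pow_rpow_comm hb10.le]
  have hA2low : B ^ N2 * c0 beta2 ^ gamma2 ≤ Phi2 x ^ gamma2 := by
    calc B ^ N2 * c0 beta2 ^ gamma2 = (beta2 ^ N2 * c0 beta2) ^ gamma2 := by
          rw [Real.mul_rpow hβN2.le hc02.le, pow_rpow_comm hb20.le, hBdef, hpow']
      _ ≤ Phi2 x ^ gamma2 := Real.rpow_le_rpow (by positivity) hP2low hg2.le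
  have hA2up : Phi2 x ^ gamma2 ≤ B ^ N2 * ε2 ^ gamma2 := by
    calc Phi2 x ^ gamma2 ≤ (beta2 ^ N2 * ε2) ^ gamma2 :=
          Real.rpow_le_rpow hP2pos.le hP2up hg2.le
      _ = B ^ N2 * ε2 ^ gamma2 := by
          rw [Real.mul_rpow hβN2.le hε2.le, pow_rpow_comm hb20.le, hBdef, hpow']
  have hA1pos : 0 < Phi1 x ^ gamma1 := Real.rpow_pos_of_pos hP1pos _
  have hA2pos : 0 < Phi2 x ^ gamma2 := Real.rpow_pos_of_pos hP2pos _
  -- ratio bounds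
  have hratio_low : cLow ≤ Phi1 x ^ gamma1 / Phi2 x ^ gamma2 := by
    have h1 : cLow ≤ (B ^ N1 * c0 beta1 ^ gamma1) / (B ^ N2 * ε2 ^ gamma2) := by
      rw [hcLow]
      have hden : B ^ N2 * ε2 ^ gamma2 ≤ B ^ N1 * (B ^ K2 * ε2 ^ gamma2) := by
        have : B ^ N2 ≤ B ^ (N1 + K2) := pow_le_pow_right₀ hB1.le hN2N1
        rw [pow_add] at this
        calc B ^ N2 * ε2 ^ gamma2 ≤ B ^ N1 * B ^ K2 * ε2 ^ gamma2 :=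
              mul_le_mul_of_nonneg_right this (Real.rpow_pos_of_pos hε2 _).le
          _ = B ^ N1 * (B ^ K2 * ε2 ^ gamma2) := by ring
      have heq : c0 beta1 ^ gamma1 / (B ^ K2 * ε2 ^ gamma2) =
          B ^ N1 * c0 beta1 ^ gamma1 / (B ^ N1 * (B ^ K2 * ε2 ^ gamma2)) := by
        rw [mul_div_mul_left _ _ (pow_pos hB0 N1).ne']
      rw [heq]
      apply div_le_div_of_nonneg_left (by positivity) ?_ hden
      positivity
    refine h1.trans (div_le_div₀ (by positivity) hA1low ?_ hA2up)
    positivity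
  have hratio_up : Phi1 x ^ gamma1 / Phi2 x ^ gamma2 ≤ cUpp := by
    have h1 : (B ^ N1 * ε1 ^ gamma1) / (B ^ N2 * c0 beta2 ^ gamma2) ≤ cUpp := by
      rw [hcUpp]
      have hnum : B ^ N1 * ε1 ^ gamma1 ≤ B ^ N2 * (B ^ K1 * ε1 ^ gamma1) := by
        have : B ^ N1 ≤ B ^ (N2 + K1) := pow_le_pow_right₀ hB1.le hN1N2
        rw [pow_add] at this
        calc B ^ N1 * ε1 ^ gamma1 ≤ B ^ N2 * B ^ K1 * ε1 ^ gamma1 :=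
              mul_le_mul_of_nonneg_right this (Real.rpow_pos_of_pos hε1 _).le
          _ = B ^ N2 * (B ^ K1 * ε1 ^ gamma1) := by ring
      have heq : B ^ K1 * ε1 ^ gamma1 / c0 beta2 ^ gamma2 =
          B ^ N2 * (B ^ K1 * ε1 ^ gamma1) / (B ^ N2 * c0 beta2 ^ gamma2) := by
        rw [mul_div_mul_left _ _ (pow_pos hB0 N2).ne']
      rw [heq]
      apply div_le_div₀ (by positivity) hnum (by positivity) le_rfl
    refine le_trans (div_le_div₀ (by positivity) hA1up ?_ hA2low) h1
    positivity
  -- cancel t^2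
  have ht2 : (t:ℝ) ^ 2 ≠ 0 := by positivity
  have hcancel : (t ^ 2 * Phi1 x ^ gamma1) / (t ^ 2 * Phi2 x ^ gamma2) =
      Phi1 x ^ gamma1 / Phi2 x ^ gamma2 := mul_div_mul_left _ _ ht2
  rw [hxdef] at hcancel
  constructor
  · rw [hcancel]
    calc cLow / 2 < cLow := by linarith
      _ ≤ _ := by rw [hxdef] at hratio_low; exact hratio_low
  · rw [hcancel]
    calc (Phi1 (1/t)) ^ gamma1 / (Phi2 (1/t)) ^ gamma2 ≤ cUpp := by
          rw [hxdef] at hratio_up; exact hratio_up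
      _ < 2 * cUpp := by linarith
end
end

section
/- For each k ∈ ℕ let 𝒜_k be a finite collection of pairwise disjoint, compact, connected subsets of ℂ of positive Lebesgue measure, and let A_k be the union of the elements of 𝒜_k. Assume: (i) every F ∈ 𝒜_{k+1} is contained in some F' ∈ 𝒜_k; (ii) there is a decreasing sequence (d_k) converging to 0 with diam F ≤ d_k for every F ∈ 𝒜_k; (iii) there are Δ_k > 0 with dens(A_{k+1}, F) ≥ Δ_k for every F ∈ 𝒜_k. Let ε > 0 and g : (0, ε) → [0, ∞) be decreasing and continuous such that t ↦ t²g(t) is increasing, t²g(t) → 0 as t → 0, and g(d_k)·∏_{j=1}^k Δ_j → ∞ as k → ∞. Define h(t) = t²g(t) for t ∈ (0, ε) and h(0) = 0. Then h is a continuous gauge function and H^h(⋂_{k∈ℕ} A_k) = ∞. -/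
open MeasureTheory Filter Set Metric
open scoped ENNReal

noncomputable section

/-- Hausdorff measure with respect to a (real) gauge function. -/
def gaugeMeasure (h : ℝ → ℝ) : Measure ℂ :=
  Measure.mkMetric (fun r : ℝ≥0∞ => ENNReal.ofReal (h r.toReal))

/-- `h` is a gauge function on `[0, ε)`: monotonically increasing, nonnegative,
continuous from the right, with `h 0 = 0`. -/
def IsGaugeOn (h : ℝ → ℝ) (ε : ℝ) : Prop :=
  0 < ε ∧ h 0 = 0 ∧ (∀ t ∈ Set.Ico (0:ℝ) ε, 0 ≤ h t) ∧
    MonotoneOn h (Set.Ico 0 ε) ∧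
    ∀ t ∈ Set.Ico (0:ℝ) ε, ContinuousWithinAt h (Set.Ici t) t

/-- The density of `A` in `B` (planar Lebesgue measure). -/
def dens (A B : Set ℂ) : ℝ≥0∞ := volume (A ∩ B) / volume B

namespace Stmt9Aux

variable {𝒜 : ℕ → Set (Set ℂ)}

/-- unique set of a pairwise disjoint family through a common point -/
lemma eq_of_inter_nonempty (hdisj : ∀ k, (𝒜 k).Pairwise Disjoint) {k : ℕ} {F G : Set ℂ}
    (hF : F ∈ 𝒜 k) (hG : G ∈ 𝒜 k) (hFG : (F ∩ G).Nonempty) : F = G := by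
  by_contra hne
  exact absurd (hdisj k hF hG hne) (by
    simp only [Set.disjoint_iff_inter_eq_empty]
    exact fun hh => hFG.ne_empty hh)

/-- Lemma L: deeper-level sets meeting a shallower-level set are contained in it. -/
lemma subset_of_level_le (hdisj : ∀ k, (𝒜 k).Pairwise Disjoint)
    (hnested : ∀ k, ∀ F ∈ 𝒜 (k + 1), ∃ F' ∈ 𝒜 k, F ⊆ F') {k : ℕ} :
    ∀ m, k ≤ m → ∀ F ∈ 𝒜 k, ∀ G ∈ 𝒜 m, (G ∩ F).Nonempty → G ⊆ F := by
  intro m hm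
  induction m, hm using Nat.le_induction with
  | base =>
    intro F hF G hG hGF
    exact (eq_of_inter_nonempty hdisj hG hF hGF).le
  | succ m hm ih =>
    intro F hF G hG hGF
    obtain ⟨P, hP, hGP⟩ := hnested m G hG
    have : (P ∩ F).Nonempty := hGF.mono (Set.inter_subset_inter_left _ hGP)
    exact hGP.trans (ih F hF P hP this)




variable {Δ : ℕ → ℝ}

lemma nonempty_of_mem (hpos : ∀ k, ∀ F ∈ 𝒜 k, 0 < volume F) {k : ℕ} {F : Set ℂ}
    (hF : F ∈ 𝒜 k) : F.Nonempty :=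
  nonempty_of_measure_ne_zero (hpos k F hF).ne'

lemma vol_lt_top (hcpt : ∀ k, ∀ F ∈ 𝒜 k, IsCompact F) {k : ℕ} {F : Set ℂ}
    (hF : F ∈ 𝒜 k) : volume F < ∞ :=
  (hcpt k F hF).measure_lt_top

lemma vol_inter_ge (hcpt : ∀ k, ∀ F ∈ 𝒜 k, IsCompact F)
    (hpos : ∀ k, ∀ F ∈ 𝒜 k, 0 < volume F)
    (hdens : ∀ k, ∀ F ∈ 𝒜 k, ENNReal.ofReal (Δ k) ≤ dens (⋃₀ 𝒜 (k + 1)) F)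
    {k : ℕ} {F : Set ℂ} (hF : F ∈ 𝒜 k) :
    ENNReal.ofReal (Δ k) * volume F ≤ volume (⋃₀ 𝒜 (k + 1) ∩ F) := by
  have h := hdens k F hF
  rw [dens] at h
  exact (ENNReal.le_div_iff_mul_le (Or.inl (hpos k F hF).ne')
    (Or.inl (vol_lt_top hcpt hF).ne)).1 h

lemma vol_inter_pos (hcpt : ∀ k, ∀ F ∈ 𝒜 k, IsCompact F)
    (hpos : ∀ k, ∀ F ∈ 𝒜 k, 0 < volume F) (hΔpos : ∀ k, 0 < Δ k)
    (hdens : ∀ k, ∀ F ∈ 𝒜 k, ENNReal.ofReal (Δ k) ≤ dens (⋃₀ 𝒜 (k + 1)) F)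
    {k : ℕ} {F : Set ℂ} (hF : F ∈ 𝒜 k) :
    0 < volume (⋃₀ 𝒜 (k + 1) ∩ F) := by
  refine lt_of_lt_of_le ?_ (vol_inter_ge hcpt hpos hdens hF)
  exact ENNReal.mul_pos (by simpa using (hΔpos k)) (hpos k F hF).ne'

open Classical in
/-- the descendants of `F` at level `m`, as a finset -/
def dsc (hfin : ∀ k, (𝒜 k).Finite) (m : ℕ) (F : Set ℂ) : Finset (Set ℂ) :=
  (hfin m).toFinset.filter (fun G => G ⊆ F)

lemma mem_dsc {hfin : ∀ k, (𝒜 k).Finite} {m : ℕ} {F G : Set ℂ} :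
    G ∈ dsc hfin m F ↔ G ∈ 𝒜 m ∧ G ⊆ F := by
  simp [dsc, Finset.mem_filter, Set.Finite.mem_toFinset]

/-- decomposition of `A (k+1) ∩ F` into children -/
lemma inter_eq_biUnion_dsc (hdisj : ∀ k, (𝒜 k).Pairwise Disjoint)
    (hnested : ∀ k, ∀ F ∈ 𝒜 (k + 1), ∃ F' ∈ 𝒜 k, F ⊆ F')
    (hfin : ∀ k, (𝒜 k).Finite) {k : ℕ} {F : Set ℂ} (hF : F ∈ 𝒜 k) :
    ⋃₀ 𝒜 (k + 1) ∩ F = ⋃ G ∈ dsc hfin (k + 1) F, G := by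
  ext x
  simp only [Set.mem_inter_iff, Set.mem_sUnion, Set.mem_iUnion, exists_prop]
  constructor
  · rintro ⟨⟨G, hG, hxG⟩, hxF⟩
    refine ⟨G, mem_dsc.2 ⟨hG, ?_⟩, hxG⟩
    exact subset_of_level_le hdisj hnested (k + 1) (Nat.le_succ k) F hF G hG ⟨x, hxG, hxF⟩
  · rintro ⟨G, hG, hxG⟩
    rw [mem_dsc] at hG
    exact ⟨⟨G, hG.1, hxG⟩, hG.2 hxG⟩

lemma vol_inter_eq_sum (hdisj : ∀ k, (𝒜 k).Pairwise Disjoint)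
    (hnested : ∀ k, ∀ F ∈ 𝒜 (k + 1), ∃ F' ∈ 𝒜 k, F ⊆ F')
    (hfin : ∀ k, (𝒜 k).Finite) (hcpt : ∀ k, ∀ F ∈ 𝒜 k, IsCompact F)
    {k : ℕ} {F : Set ℂ} (hF : F ∈ 𝒜 k) :
    volume (⋃₀ 𝒜 (k + 1) ∩ F) = ∑ G ∈ dsc hfin (k + 1) F, volume G := by
  rw [inter_eq_biUnion_dsc hdisj hnested hfin hF]
  refine measure_biUnion_finset ?_ ?_
  · intro G hG G' hG' hne
    exact hdisj (k + 1) (mem_dsc.1 (by exact_mod_cast hG)).1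
      (mem_dsc.1 (by exact_mod_cast hG')).1 hne
  · intro G hG
    exact (hcpt (k + 1) G (mem_dsc.1 hG).1).measurableSet



lemma sum_union_le' {β : Type*} [DecidableEq β] (s t : Finset β) (f : β → ℝ≥0∞) :
    ∑ x ∈ s ∪ t, f x ≤ ∑ x ∈ s, f x + ∑ x ∈ t, f x := by
  rw [show s ∪ t = s ∪ (t \ s) from (Finset.union_sdiff_self_eq_union).symm,
    Finset.sum_union (Finset.disjoint_sdiff : Disjoint s (t \ s))]
  exact add_le_add le_rfl (Finset.sum_le_sum_of_subset Finset.sdiff_subset)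

lemma sum_biUnion_le' {α β : Type*} [DecidableEq β] (s : Finset α) (t : α → Finset β)
    (f : β → ℝ≥0∞) : ∑ x ∈ s.biUnion t, f x ≤ ∑ a ∈ s, ∑ x ∈ t a, f x := by
  classical
  induction s using Finset.induction with
  | empty => simp
  | insert _ _ hnotmem ih =>
    rename_i a s
    rw [Finset.biUnion_insert, Finset.sum_insert hnotmem]
    exact (sum_union_le' _ _ f).trans (add_le_add le_rfl ih)

/-- mass distribution weight -/
def wgt (𝒜 : ℕ → Set (Set ℂ)) (par : ℕ → Set ℂ → Set ℂ) : ℕ → Set ℂ → ℝ≥0∞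
  | 0, F => volume F
  | (k+1), F => wgt 𝒜 par k (par k F) * volume F / volume (⋃₀ 𝒜 (k + 1) ∩ par k F)

variable {par : ℕ → Set ℂ → Set ℂ}

section Wgt

variable (hdisj : ∀ k, (𝒜 k).Pairwise Disjoint)
  (hnested : ∀ k, ∀ F ∈ 𝒜 (k + 1), ∃ F' ∈ 𝒜 k, F ⊆ F')
  (hfin : ∀ k, (𝒜 k).Finite)
  (hcpt : ∀ k, ∀ F ∈ 𝒜 k, IsCompact F)
  (hpos : ∀ k, ∀ F ∈ 𝒜 k, 0 < volume F)
  (hΔpos : ∀ k, 0 < Δ k)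
  (hdens : ∀ k, ∀ F ∈ 𝒜 k, ENNReal.ofReal (Δ k) ≤ dens (⋃₀ 𝒜 (k + 1)) F)
  (hpar : ∀ k, ∀ F ∈ 𝒜 (k + 1), par k F ∈ 𝒜 k ∧ F ⊆ par k F)

include hdisj hnested hfin hcpt hpos hΔpos hdens hpar

/-- the weight of a set is the sum of the weights of its children -/
lemma wgt_sum_children {k : ℕ} {F : Set ℂ} (hF : F ∈ 𝒜 k) :
    ∑ G ∈ dsc hfin (k + 1) F, wgt 𝒜 par (k + 1) G = wgt 𝒜 par k F := by
  have hc0 : volume (⋃₀ 𝒜 (k + 1) ∩ F) ≠ 0 :=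
    (vol_inter_pos hcpt hpos hΔpos hdens hF).ne'
  have hct : volume (⋃₀ 𝒜 (k + 1) ∩ F) ≠ ∞ := by
    refine ne_of_lt (lt_of_le_of_lt (measure_mono Set.inter_subset_right) ?_)
    exact vol_lt_top hcpt hF
  have hstep : ∀ G ∈ dsc hfin (k + 1) F,
      wgt 𝒜 par (k + 1) G = wgt 𝒜 par k F / volume (⋃₀ 𝒜 (k + 1) ∩ F) * volume G := by
    intro G hG
    rw [mem_dsc] at hG
    have hparG := hpar k G hG.1
    have hGne : G.Nonempty := nonempty_of_mem hpos hG.1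
    have : par k G = F := by
      refine eq_of_inter_nonempty hdisj hparG.1 (by exact hF) ?_
      exact hGne.mono (Set.subset_inter hparG.2 hG.2)
    show wgt 𝒜 par k (par k G) * volume G / volume (⋃₀ 𝒜 (k + 1) ∩ par k G) = _
    rw [this, div_eq_mul_inv, div_eq_mul_inv]
    ring
  rw [Finset.sum_congr rfl hstep, ← Finset.mul_sum,
    ← vol_inter_eq_sum hdisj hnested hfin hcpt hF]
  exact ENNReal.div_mul_cancel hc0 hct

/-- upper bound for the weight -/
lemma wgt_le {k : ℕ} {F : Set ℂ} (hF : F ∈ 𝒜 k) :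
    ENNReal.ofReal (∏ j ∈ Finset.range k, Δ j) * wgt 𝒜 par k F ≤ volume F := by
  induction k generalizing F with
  | zero => simp [wgt]
  | succ k ih =>
    have hparF := hpar k F hF
    set P := par k F with hPdef
    have hP : P ∈ 𝒜 k := hparF.1
    set c := volume (⋃₀ 𝒜 (k + 1) ∩ P) with hcdef
    have hc0 : c ≠ 0 := (vol_inter_pos hcpt hpos hΔpos hdens hP).ne'
    have hct : c ≠ ∞ := by
      refine ne_of_lt (lt_of_le_of_lt (measure_mono Set.inter_subset_right) ?_)
      exact vol_lt_top hcpt hP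
    have h2 : ENNReal.ofReal (Δ k) * volume P ≤ c := vol_inter_ge hcpt hpos hdens hP
    have hprodnn : 0 ≤ ∏ j ∈ Finset.range k, Δ j :=
      Finset.prod_nonneg fun j _ => (hΔpos j).le
    calc ENNReal.ofReal (∏ j ∈ Finset.range (k+1), Δ j) * wgt 𝒜 par (k+1) F
        = (ENNReal.ofReal (∏ j ∈ Finset.range k, Δ j) * wgt 𝒜 par k P) *
            (ENNReal.ofReal (Δ k) * volume F) / c := by
          show ENNReal.ofReal (∏ j ∈ Finset.range (k+1), Δ j) *
            (wgt 𝒜 par k P * volume F / c) = _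
          rw [Finset.prod_range_succ, ENNReal.ofReal_mul hprodnn,
            div_eq_mul_inv, div_eq_mul_inv]
          ring
      _ ≤ volume P * (ENNReal.ofReal (Δ k) * volume F) / c := by
          exact ENNReal.div_le_div_right (mul_le_mul_left (ih hP) _) c
      _ = (ENNReal.ofReal (Δ k) * volume P) * volume F / c := by
          rw [div_eq_mul_inv, div_eq_mul_inv]; ring
      _ ≤ c * volume F / c := by
          exact ENNReal.div_le_div_right (mul_le_mul_left h2 _) c
      _ = volume F := by
          rw [mul_comm, mul_div_assoc, ENNReal.div_self hc0 hct, mul_one]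

/-- singleton descendants at the same level -/
lemma dsc_self {k : ℕ} {F : Set ℂ} (hF : F ∈ 𝒜 k) : dsc hfin k F = {F} := by
  ext G
  rw [mem_dsc, Finset.mem_singleton]
  constructor
  · rintro ⟨hG, hGF⟩
    exact eq_of_inter_nonempty hdisj hG hF
      ((nonempty_of_mem hpos hG).mono (Set.subset_inter Subset.rfl hGF))
  · rintro rfl
    exact ⟨hF, Subset.rfl⟩

/-- the weight of a set is the sum of the weights of its level-`m` descendants -/
lemma wgt_sum_dsc {k : ℕ} {F : Set ℂ} (hF : F ∈ 𝒜 k) :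
    ∀ m, k ≤ m → ∑ G ∈ dsc hfin m F, wgt 𝒜 par m G = wgt 𝒜 par k F := by
  intro m hm
  induction m, hm using Nat.le_induction with
  | base => rw [dsc_self hdisj hnested hfin hcpt hpos hΔpos hdens hpar hF, Finset.sum_singleton]
  | succ m hm ih =>
    classical
    have hbiUnion : dsc hfin (m + 1) F = (dsc hfin m F).biUnion (fun G => dsc hfin (m + 1) G) := by
      ext G'
      simp only [Finset.mem_biUnion, mem_dsc]
      constructor
      · rintro ⟨hG', hG'F⟩
        have hparG' := hpar m G' hG'
        refine ⟨par m G', ⟨hparG'.1, ?_⟩, hG', hparG'.2⟩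
        refine subset_of_level_le hdisj hnested m hm F hF _ hparG'.1 ?_
        exact (nonempty_of_mem hpos hG').mono (Set.subset_inter hparG'.2 hG'F)
      · rintro ⟨G, ⟨hG, hGF⟩, hG', hG'G⟩
        exact ⟨hG', hG'G.trans hGF⟩
    have hdisjf : Set.PairwiseDisjoint ↑(dsc hfin m F) (fun G => dsc (𝒜 := 𝒜) hfin (m + 1) G) := by
      intro G₁ hG₁ G₂ hG₂ hne
      simp only [Finset.coe_mem, Function.onFun] at *
      rw [Finset.disjoint_left]
      intro G' hG'₁ hG'₂
      refine hne ?_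
      have h1 := mem_dsc.1 (by exact_mod_cast hG'₁)
      have h2 := mem_dsc.1 (by exact_mod_cast hG'₂)
      have hm1 := mem_dsc.1 (by exact_mod_cast hG₁)
      have hm2 := mem_dsc.1 (by exact_mod_cast hG₂)
      refine eq_of_inter_nonempty hdisj hm1.1 hm2.1 ?_
      exact (nonempty_of_mem hpos h1.1).mono (Set.subset_inter h1.2 h2.2)
    rw [hbiUnion, Finset.sum_biUnion hdisjf]
    rw [Finset.sum_congr rfl (fun G hG =>
      wgt_sum_children hdisj hnested hfin hcpt hpos hΔpos hdens hpar (mem_dsc.1 hG).1)]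
    exact ih

end Wgt



section Struct

set_option linter.unusedSectionVars false

variable (hdisj : ∀ k, (𝒜 k).Pairwise Disjoint)
  (hnested : ∀ k, ∀ F ∈ 𝒜 (k + 1), ∃ F' ∈ 𝒜 k, F ⊆ F')
  (hfin : ∀ k, (𝒜 k).Finite)
  (hcpt : ∀ k, ∀ F ∈ 𝒜 k, IsCompact F)
  (hpos : ∀ k, ∀ F ∈ 𝒜 k, 0 < volume F)
  (hΔpos : ∀ k, 0 < Δ k)
  (hdens : ∀ k, ∀ F ∈ 𝒜 k, ENNReal.ofReal (Δ k) ≤ dens (⋃₀ 𝒜 (k + 1)) F)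

include hdisj hnested hfin hcpt hpos hΔpos hdens

lemma A_closed (k : ℕ) : IsClosed (⋃₀ 𝒜 k) := by
  rw [Set.sUnion_eq_biUnion]
  exact (hfin k).isClosed_biUnion fun F hF => (hcpt k F hF).isClosed

lemma A_compact (k : ℕ) : IsCompact (⋃₀ 𝒜 k) := by
  rw [Set.sUnion_eq_biUnion]
  exact (hfin k).isCompact_biUnion fun F hF => hcpt k F hF

lemma A_anti : Antitone (fun k => ⋃₀ 𝒜 k) := by
  refine antitone_nat_of_succ_le fun k => ?_
  rintro x ⟨F, hF, hxF⟩
  obtain ⟨P, hP, hFP⟩ := hnested k F hF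
  exact ⟨P, hP, hFP hxF⟩

lemma exists_descendant {k : ℕ} {F : Set ℂ} (hF : F ∈ 𝒜 k) :
    ∀ m, k ≤ m → ∃ G ∈ 𝒜 m, G ⊆ F := by
  intro m hm
  induction m, hm using Nat.le_induction with
  | base => exact ⟨F, hF, Subset.rfl⟩
  | succ m hm ih =>
    obtain ⟨G, hG, hGF⟩ := ih
    have hAG : (⋃₀ 𝒜 (m + 1) ∩ G).Nonempty :=
      nonempty_of_measure_ne_zero (vol_inter_pos hcpt hpos hΔpos hdens hG).ne'
    obtain ⟨x, ⟨G', hG', hxG'⟩, hxG⟩ := hAG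
    refine ⟨G', hG', subset_trans ?_ hGF⟩
    exact subset_of_level_le hdisj hnested (m + 1) (Nat.le_succ m) G hG G' hG' ⟨x, hxG', hxG⟩

/-- every set of the family contains a point of the limit set -/
lemma E_inter_nonempty {k : ℕ} {F : Set ℂ} (hF : F ∈ 𝒜 k) :
    ((⋂ n, ⋃₀ 𝒜 n) ∩ F).Nonempty := by
  have key : (⋂ n, (⋃₀ 𝒜 (k + n) ∩ F)).Nonempty := by
    refine IsCompact.nonempty_iInter_of_sequence_nonempty_isCompact_isClosed
      (fun n => ⋃₀ 𝒜 (k + n) ∩ F) (fun n => ?_) (fun n => ?_) ?_ (fun n => ?_)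
    · exact Set.inter_subset_inter_left F
        (A_anti hdisj hnested hfin hcpt hpos hΔpos hdens (Nat.le_succ (k + n) |>.trans_eq (by omega)))
    · obtain ⟨G, hG, hGF⟩ := exists_descendant hdisj hnested hfin hcpt hpos hΔpos hdens hF
        (k + n) (by omega)
      exact (nonempty_of_mem hpos hG).mono (Set.subset_inter (fun x hx => ⟨G, hG, hx⟩) hGF)
    · exact ((A_compact hdisj hnested hfin hcpt hpos hΔpos hdens (k + 0)).inter_right
        (hcpt k F hF).isClosed)
    · exact (A_closed hdisj hnested hfin hcpt hpos hΔpos hdens (k + n)).inter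
        (hcpt k F hF).isClosed
  refine key.mono ?_
  rw [Set.subset_def]
  intro x hx
  simp only [Set.mem_iInter, Set.mem_inter_iff] at hx ⊢
  refine ⟨fun n => ?_, (hx 0).2⟩
  exact A_anti hdisj hnested hfin hcpt hpos hΔpos hdens (le_add_self : n ≤ k + n) (hx n).1

lemma 𝒜_nonempty (hne : (𝒜 0).Nonempty) (k : ℕ) : (𝒜 k).Nonempty := by
  obtain ⟨F, hF⟩ := hne
  obtain ⟨G, hG, -⟩ := exists_descendant hdisj hnested hfin hcpt hpos hΔpos hdens hF k
    (Nat.zero_le k)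
  exact ⟨G, hG⟩

lemma d_pos (hne : (𝒜 0).Nonempty) {d : ℕ → ℝ}
    (hdiam : ∀ k, ∀ F ∈ 𝒜 k, Metric.diam F ≤ d k) (k : ℕ) : 0 < d k := by
  obtain ⟨F, hF⟩ := 𝒜_nonempty hdisj hnested hfin hcpt hpos hΔpos hdens hne k
  by_contra hle
  push_neg at hle
  have hd0 : Metric.diam F = 0 :=
    le_antisymm ((hdiam k F hF).trans hle) Metric.diam_nonneg
  have hb : EMetric.diam F ≠ ⊤ :=
    Metric.isBounded_iff_ediam_ne_top.1 (hcpt k F hF).isBounded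
  have hsubsing : F.Subsingleton := by
    rw [Metric.diam, ENNReal.toReal_eq_zero_iff] at hd0
    rcases hd0 with h | h
    · exact EMetric.diam_eq_zero_iff.1 h
    · exact absurd h hb
  exact absurd (hsubsing.measure_zero volume) (hpos k F hF).ne'

end Struct



section Gauge

variable {ε : ℝ} {g h : ℝ → ℝ}

lemma gauge_eqOn (hh0 : h 0 = 0)
    (hht : ∀ t ∈ Set.Ioo (0:ℝ) ε, h t = t ^ 2 * g t) :
    Set.EqOn h (fun t => t ^ 2 * g t) (Set.Ico 0 ε) := by
  intro t ht
  rcases eq_or_lt_of_le ht.1 with rfl | htpos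
  · simpa using hh0
  · exact hht t ⟨htpos, ht.2⟩

lemma gauge_continuousOn
    (hg_cont : ContinuousOn g (Set.Ioo 0 ε))
    (hlim0 : Tendsto (fun t => t ^ 2 * g t) (nhdsWithin 0 (Set.Ioi 0)) (nhds 0))
    (hh0 : h 0 = 0) (hht : ∀ t ∈ Set.Ioo (0:ℝ) ε, h t = t ^ 2 * g t) :
    ContinuousOn h (Set.Ico 0 ε) := by
  have heq := gauge_eqOn hh0 hht
  have hf : ContinuousOn (fun t : ℝ => t ^ 2 * g t) (Set.Ico 0 ε) := by
    intro t ht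
    rcases eq_or_lt_of_le ht.1 with rfl | htpos
    · have h0 : (0:ℝ) ^ 2 * g 0 = 0 := by norm_num
      have key : Tendsto (fun t : ℝ => t ^ 2 * g t) (nhdsWithin 0 (Set.Ico 0 ε)) (nhds 0) := by
        have hsub : Set.Ico (0:ℝ) ε ⊆ {0} ∪ Set.Ioi 0 := by
          intro x hx
          rcases eq_or_lt_of_le hx.1 with rfl | hxpos
          · exact Or.inl rfl
          · exact Or.inr hxpos
        refine Tendsto.mono_left ?_ (nhdsWithin_mono _ hsub)
        rw [nhdsWithin_union, nhdsWithin_singleton]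
        refine Tendsto.sup ?_ hlim0
        have hp := tendsto_pure_nhds (fun t : ℝ => t ^ 2 * g t) 0
        simp only [h0] at hp
        exact hp
      show Tendsto _ _ (nhds ((0:ℝ) ^ 2 * g 0))
      rw [h0]
      exact key
    · have hgat : ContinuousAt g t :=
        hg_cont.continuousAt (isOpen_Ioo.mem_nhds ⟨htpos, ht.2⟩)
      exact (((continuous_pow 2).continuousAt).mul hgat).continuousWithinAt
  exact hf.congr heq

lemma gauge_nonnegOn (hg_nonneg : ∀ t ∈ Set.Ioo (0:ℝ) ε, 0 ≤ g t)
    (hh0 : h 0 = 0) (hht : ∀ t ∈ Set.Ioo (0:ℝ) ε, h t = t ^ 2 * g t) :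
    ∀ t ∈ Set.Ico (0:ℝ) ε, 0 ≤ h t := by
  intro t ht
  rcases eq_or_lt_of_le ht.1 with rfl | htpos
  · exact hh0.ge
  · rw [hht t ⟨htpos, ht.2⟩]
    exact mul_nonneg (sq_nonneg t) (hg_nonneg t ⟨htpos, ht.2⟩)

lemma gauge_monotoneOn (hg_nonneg : ∀ t ∈ Set.Ioo (0:ℝ) ε, 0 ≤ g t)
    (hmono : MonotoneOn (fun t => t ^ 2 * g t) (Set.Ioo 0 ε))
    (hh0 : h 0 = 0) (hht : ∀ t ∈ Set.Ioo (0:ℝ) ε, h t = t ^ 2 * g t) :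
    MonotoneOn h (Set.Ico 0 ε) := by
  intro s hs t ht hst
  rcases eq_or_lt_of_le hs.1 with rfl | hspos
  · rw [hh0]
    exact gauge_nonnegOn hg_nonneg hh0 hht t ht
  · have hspos' : s ∈ Set.Ioo (0:ℝ) ε := ⟨hspos, hs.2⟩
    have htpos' : t ∈ Set.Ioo (0:ℝ) ε := ⟨lt_of_lt_of_le hspos hst, ht.2⟩
    rw [hht s hspos', hht t htpos']
    exact hmono hspos' htpos' hst

lemma gauge_right_continuous (hε : 0 < ε)
    (hcont : ContinuousOn h (Set.Ico 0 ε)) :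
    ∀ t ∈ Set.Ico (0:ℝ) ε, ContinuousWithinAt h (Set.Ici t) t := by
  intro t ht
  have hmem : Set.Ici t ∩ Set.Iio ε ∈ nhdsWithin t (Set.Ici t) :=
    Filter.inter_mem self_mem_nhdsWithin
      (mem_nhdsWithin_of_mem_nhds (Iio_mem_nhds ht.2))
  have hsubset : Set.Ici t ∩ Set.Iio ε ⊆ Set.Ico 0 ε := fun x hx => ⟨le_trans ht.1 hx.1, hx.2⟩
  exact ((hcont t ht).mono hsubset).mono_of_mem_nhdsWithin hmem

end Gauge



lemma eq_top_of_forall_ofReal_le {x : ℝ≥0∞} (hx : ∀ c : ℝ, ENNReal.ofReal c ≤ x) : x = ∞ := by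
  by_contra hne
  have h1 : x = ENNReal.ofReal x.toReal := (ENNReal.ofReal_toReal hne).symm
  have h2 := hx (x.toReal + 1)
  have h3 : ENNReal.ofReal x.toReal < ENNReal.ofReal (x.toReal + 1) := by
    rw [ENNReal.ofReal_lt_ofReal_iff (by positivity)]
    linarith
  rw [← h1] at h3
  exact absurd h2 (not_le.2 h3)

section Main

set_option linter.unusedSectionVars false
set_option maxHeartbeats 1000000

variable {d : ℕ → ℝ} {ε : ℝ} {g h : ℝ → ℝ}

lemma measure_part
    (hfin : ∀ k, (𝒜 k).Finite) (hne : (𝒜 0).Nonempty)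
    (hdisj : ∀ k, (𝒜 k).Pairwise Disjoint)
    (hcpt : ∀ k, ∀ F ∈ 𝒜 k, IsCompact F)
    (hpos : ∀ k, ∀ F ∈ 𝒜 k, 0 < volume F)
    (hnested : ∀ k, ∀ F ∈ 𝒜 (k + 1), ∃ F' ∈ 𝒜 k, F ⊆ F')
    (hd_anti : Antitone d) (hd_lim : Tendsto d atTop (nhds 0))
    (hdiam : ∀ k, ∀ F ∈ 𝒜 k, Metric.diam F ≤ d k)
    (hΔpos : ∀ k, 0 < Δ k)
    (hdens : ∀ k, ∀ F ∈ 𝒜 k, ENNReal.ofReal (Δ k) ≤ dens (⋃₀ 𝒜 (k + 1)) F)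
    (hε : 0 < ε)
    (hg_nonneg : ∀ t ∈ Set.Ioo (0:ℝ) ε, 0 ≤ g t)
    (hg_anti : AntitoneOn g (Set.Ioo 0 ε))
    (hdiv : Tendsto (fun k => g (d k) * ∏ j ∈ Finset.range (k + 1), Δ j) atTop atTop)
    (hh0 : h 0 = 0) (hht : ∀ t ∈ Set.Ioo (0:ℝ) ε, h t = t ^ 2 * g t)
    (hmonoh : MonotoneOn h (Set.Ico 0 ε))
    (hnonneg : ∀ t ∈ Set.Ico (0:ℝ) ε, 0 ≤ h t)
    (hrc : ∀ t ∈ Set.Ico (0:ℝ) ε, ContinuousWithinAt h (Set.Ici t) t)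
    (par : ℕ → Set ℂ → Set ℂ)
    (hpar : ∀ k, ∀ F ∈ 𝒜 (k + 1), par k F ∈ 𝒜 k ∧ F ⊆ par k F) :
    Measure.mkMetric (fun r : ℝ≥0∞ => ENNReal.ofReal (h r.toReal)) (⋂ k, ⋃₀ 𝒜 k) = ∞ := by
  classical
  set E := ⋂ k, ⋃₀ 𝒜 k with hEdef
  have hEclosed : IsClosed E :=
    isClosed_iInter (fun k => A_closed hdisj hnested hfin hcpt hpos hΔpos hdens k)
  have hEcpt : IsCompact E :=
    (A_compact hdisj hnested hfin hcpt hpos hΔpos hdens 0).of_isClosed_subset hEclosed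
      (Set.iInter_subset _ 0)
  obtain ⟨F₀, hF₀⟩ := hne
  have hv0 : volume F₀ ≠ 0 := (hpos 0 F₀ hF₀).ne'
  have hvt : volume F₀ ≠ ∞ := (vol_lt_top hcpt hF₀).ne
  set v := (volume F₀).toReal with hvdef
  have hvpos : 0 < v := ENNReal.toReal_pos hv0 hvt
  rw [Measure.mkMetric_apply]
  refine eq_top_of_forall_ofReal_le fun c => ?_
  rcases le_or_gt c 0 with hc | hc
  · refine le_trans (le_of_eq (ENNReal.ofReal_eq_zero.2 hc)) (zero_le)
  -- choice of the starting level
  set Mc := 4 * Real.pi * (c + 3) / v with hMcdef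
  obtain ⟨k₀, hk₀⟩ : ∃ k₀, ∀ k, k₀ ≤ k →
      Mc ≤ g (d k) * ∏ j ∈ Finset.range (k + 1), Δ j ∧ d k < ε := by
    have h1 := hdiv.eventually_ge_atTop Mc
    have h2 := hd_lim.eventually (gt_mem_nhds hε)
    exact Filter.eventually_atTop.1 (h1.and h2)
  set δ' := d k₀ with hδ'def
  have hδ'pos : 0 < δ' := d_pos hdisj hnested hfin hcpt hpos hΔpos hdens ⟨F₀, hF₀⟩ hdiam k₀
  have hδ'ε : δ' < ε := (hk₀ k₀ le_rfl).2
  set δ := δ' / 2 with hδdef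
  have hδpos : 0 < δ := by positivity
  have hδε : δ < ε := by simp only [hδdef]; linarith
  -- the level selection
  have hksel : ∀ T : ℝ, 0 < T → T ≤ δ' → ∃ k, k₀ ≤ k ∧ T ≤ d k ∧ d (k + 1) < T := by
    intro T hT hTδ'
    have hex : ∃ j, d j < T := (hd_lim.eventually (gt_mem_nhds hT)).exists
    have hjspec : d (Nat.find hex) < T := Nat.find_spec hex
    have hj0 : ∀ i, i ≤ k₀ → ¬ d i < T := fun i hi =>
      not_lt.2 (hTδ'.trans (hd_anti hi))
    have hjgt : k₀ < Nat.find hex := by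
      by_contra hle
      push_neg at hle
      exact hj0 _ hle hjspec
    obtain ⟨k, hk⟩ : ∃ k, Nat.find hex = k + 1 := ⟨Nat.find hex - 1, by omega⟩
    refine ⟨k, by omega, ?_, by rw [← hk]; exact hjspec⟩
    exact not_lt.1 (Nat.find_min hex (by omega))
  refine le_trans ?_ (le_iSup₂ (f := fun r (_ : 0 < r) =>
    ⨅ (t : ℕ → Set ℂ) (_ : E ⊆ iUnion t) (_ : ∀ n, EMetric.diam (t n) ≤ r),
      ∑' n, ⨆ _ : (t n).Nonempty, ENNReal.ofReal (h (EMetric.diam (t n)).toReal))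
    (ENNReal.ofReal δ) (ENNReal.ofReal_pos.2 hδpos))
  refine le_iInf fun t => le_iInf fun hcov => le_iInf fun hdiamle => ?_
  -- basic diameter facts
  have hsn : ∀ n : ℕ, 0 ≤ Metric.diam (t n) ∧ Metric.diam (t n) ≤ δ := fun n =>
    ⟨Metric.diam_nonneg, ENNReal.toReal_le_of_le_ofReal hδpos.le (hdiamle n)⟩
  -- choice of thickening radii
  have hρex : ∀ n : ℕ, ∃ ρ : ℝ, 0 < ρ ∧ 2 * ρ ≤ δ ∧
      ∀ y : ℝ, Metric.diam (t n) ≤ y → y ≤ Metric.diam (t n) + 2 * ρ →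
        h y ≤ h (Metric.diam (t n)) + (1 / 2) ^ n := by
    intro n
    set s := Metric.diam (t n) with hsdef
    have hs0 : 0 ≤ s := (hsn n).1
    have hsδ : s ≤ δ := (hsn n).2
    have hsIco : s ∈ Set.Ico (0:ℝ) ε := ⟨hs0, lt_of_le_of_lt hsδ hδε⟩
    have hcw := hrc s hsIco
    have hev : h ⁻¹' Set.Iio (h s + (1 / 2) ^ n) ∈ nhdsWithin s (Set.Ici s) := by
      refine hcw (Iio_mem_nhds ?_)
      have : (0:ℝ) < (1 / 2) ^ n := by positivity
      linarith
    rw [Metric.mem_nhdsWithin_iff] at hev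
    obtain ⟨r, hr, hball⟩ := hev
    refine ⟨min (r / 4) (δ / 2), by positivity, ?_, ?_⟩
    · have : min (r / 4) (δ / 2) ≤ δ / 2 := min_le_right _ _
      linarith
    · intro y hy1 hy2
      have hyr : y - s < r := by
        have h1 : min (r / 4) (δ / 2) ≤ r / 4 := min_le_left _ _
        have := hy2
        nlinarith [hr]
      have hmem : y ∈ Metric.ball s r ∩ Set.Ici s := by
        constructor
        · rw [Metric.mem_ball, Real.dist_eq, abs_of_nonneg (by linarith)]
          exact hyr
        · exact hy1
      exact (hball hmem).le
  choose ρ hρpos hρδ hρh using hρex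
  -- the thickened cover
  set V : ℕ → Set ℂ := fun n => Metric.thickening (ρ n) (t n) with hVdef
  have hEV : E ⊆ ⋃ n, V n :=
    hcov.trans (Set.iUnion_mono fun n => Metric.self_subset_thickening (hρpos n) _)
  obtain ⟨I, hI⟩ := hEcpt.elim_finite_subcover V (fun n => Metric.isOpen_thickening) hEV
  set I' := I.filter (fun n => (t n).Nonempty) with hI'def
  have hI' : E ⊆ ⋃ n ∈ I', V n := by
    intro x hx
    have := hI hx
    simp only [Set.mem_iUnion, exists_prop] at this ⊢
    obtain ⟨n, hnI, hxVn⟩ := this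
    refine ⟨n, Finset.mem_filter.2 ⟨hnI, ?_⟩, hxVn⟩
    by_contra hemp
    rw [Set.not_nonempty_iff_eq_empty] at hemp
    rw [hVdef] at hxVn
    simp only [hemp, Metric.thickening_empty] at hxVn
    exact hxVn
  -- diameter of the thickened sets
  have hVbounded : ∀ n : ℕ, Bornology.IsBounded (V n) := by
    intro n
    have hbt : Bornology.IsBounded (t n) := by
      rw [Metric.isBounded_iff_ediam_ne_top]
      exact ne_top_of_le_ne_top ENNReal.ofReal_ne_top (hdiamle n)
    exact hbt.thickening
  have hVdiam_le : ∀ n : ℕ, Metric.diam (V n) ≤ Metric.diam (t n) + 2 * ρ n := by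
    intro n
    have hρn := (hρpos n).le
    have e1 := Metric.ediam_thickening_le (s := t n) ((ρ n).toNNReal)
    rw [Real.coe_toNNReal _ hρn] at e1
    have hfin1 : EMetric.diam (t n) ≠ ⊤ := ne_top_of_le_ne_top ENNReal.ofReal_ne_top (hdiamle n)
    have hfin2 : (2 * ((ρ n).toNNReal : ℝ≥0∞)) ≠ ⊤ := by
      exact ENNReal.mul_ne_top (by simp) ENNReal.coe_ne_top
    calc Metric.diam (V n) = (EMetric.diam (V n)).toReal := rfl
      _ ≤ (EMetric.diam (t n) + 2 * ((ρ n).toNNReal : ℝ≥0∞)).toReal := by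
          refine ENNReal.toReal_mono ?_ e1
          exact ENNReal.add_ne_top.2 ⟨hfin1, hfin2⟩
      _ = Metric.diam (t n) + 2 * ρ n := by
          rw [ENNReal.toReal_add hfin1 hfin2, ENNReal.toReal_mul]
          simp [Metric.diam, Real.coe_toNNReal _ hρn]
          rfl
  have hVdiam_pos : ∀ n : ℕ, (t n).Nonempty → 0 < Metric.diam (V n) := by
    intro n hne'
    obtain ⟨x, hx⟩ := hne'
    have hx1 : x ∈ V n := Metric.self_subset_thickening (hρpos n) _ hx
    have hdist : dist (x + ((ρ n / 2 : ℝ) : ℂ)) x = ρ n / 2 := by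
      rw [Complex.dist_eq, add_sub_cancel_left, Complex.norm_real, Real.norm_eq_abs,
        abs_of_pos (by linarith [hρpos n])]
    have hx2 : x + ((ρ n / 2 : ℝ) : ℂ) ∈ V n := by
      refine Metric.mem_thickening_iff.2 ⟨x, hx, ?_⟩
      rw [hdist]
      linarith [hρpos n]
    calc (0:ℝ) < ρ n / 2 := by linarith [hρpos n]
      _ = dist (x + ((ρ n / 2 : ℝ) : ℂ)) x := hdist.symm
      _ ≤ Metric.diam (V n) := Metric.dist_le_diam_of_mem (hVbounded n) hx2 hx1
  have hVδ' : ∀ n : ℕ, Metric.diam (V n) ≤ δ' := fun n => by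
    have := hVdiam_le n
    have h1 := (hsn n).2
    have h2 := hρδ n
    simp only [hδdef] at h1 h2 ⊢
    linarith
  -- the level of each covering set
  set kk : ℕ → ℕ := fun n =>
    if hn : 0 < Metric.diam (V n) then (hksel _ hn (hVδ' n)).choose else 0 with hkkdef
  have hkk : ∀ n, 0 < Metric.diam (V n) →
      k₀ ≤ kk n ∧ Metric.diam (V n) ≤ d (kk n) ∧ d (kk n + 1) < Metric.diam (V n) := by
    intro n hn
    simp only [hkkdef, dif_pos hn]
    exact (hksel _ hn (hVδ' n)).choose_spec
  -- the caught families and masses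
  set ffam : ℕ → Finset (Set ℂ) := fun n =>
    (hfin (kk n + 1)).toFinset.filter (fun F => (F ∩ V n).Nonempty) with hffamdef
  set S : ℕ → ℝ≥0∞ := fun n => ∑ F ∈ ffam n, wgt 𝒜 par (kk n + 1) F with hSdef
  -- step (a): volume catch bound
  have hstepA : ∀ n ∈ I', ENNReal.ofReal (∏ j ∈ Finset.range (kk n + 1), Δ j) * S n ≤
      ENNReal.ofReal (4 * Real.pi) * ENNReal.ofReal (Metric.diam (V n) ^ 2) := by
    intro n hnI'
    have htne : (t n).Nonempty := (Finset.mem_filter.1 hnI').2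
    have hVne : (V n).Nonempty := htne.mono (Metric.self_subset_thickening (hρpos n) _)
    obtain ⟨x₀, hx₀⟩ := hVne
    have hTpos : 0 < Metric.diam (V n) := hVdiam_pos n htne
    have hkkn := hkk n hTpos
    have hmemffam : ∀ F ∈ ffam n, F ∈ 𝒜 (kk n + 1) ∧ (F ∩ V n).Nonempty := by
      intro F hF
      rw [hffamdef] at hF
      simp only [Finset.mem_filter, Set.Finite.mem_toFinset] at hF
      exact hF
    have hsub : ∀ F ∈ ffam n, F ⊆ Metric.closedBall x₀ (2 * Metric.diam (V n)) := by
      intro F hF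
      obtain ⟨hFmem, y, hyF, hyV⟩ := hmemffam F hF
      intro z hz
      have hbF : Bornology.IsBounded F := (hcpt _ F hFmem).isBounded
      have h1 : dist z y ≤ Metric.diam F := Metric.dist_le_diam_of_mem hbF hz hyF
      have h2 : dist y x₀ ≤ Metric.diam (V n) :=
        Metric.dist_le_diam_of_mem (hVbounded n) hyV hx₀
      have h3 : Metric.diam F ≤ d (kk n + 1) := hdiam _ F hFmem
      have h4 : d (kk n + 1) < Metric.diam (V n) := hkkn.2.2
      rw [Metric.mem_closedBall]
      calc dist z x₀ ≤ dist z y + dist y x₀ := dist_triangle _ _ _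
        _ ≤ 2 * Metric.diam (V n) := by linarith
    have hvol : ∑ F ∈ ffam n, volume F ≤
        ENNReal.ofReal (4 * Real.pi) * ENNReal.ofReal (Metric.diam (V n) ^ 2) := by
      have hdisjf : Set.PairwiseDisjoint (↑(ffam n) : Set (Set ℂ)) id := by
        intro F hF G hG hne'
        exact hdisj _ (hmemffam F (by exact_mod_cast hF)).1
          (hmemffam G (by exact_mod_cast hG)).1 hne'
      have hmeq : volume (⋃ F ∈ ffam n, F) = ∑ F ∈ ffam n, volume F :=
        measure_biUnion_finset hdisjf
          (fun F hF => (hcpt _ F (hmemffam F hF).1).measurableSet)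
      rw [← hmeq]
      refine le_trans (measure_mono (Set.iUnion₂_subset hsub)) ?_
      rw [Complex.volume_closedBall]
      have hball : ENNReal.ofReal ((2 * Metric.diam (V n)) ^ 2 * Real.pi) =
          (ENNReal.ofReal (2 * Metric.diam (V n))) ^ 2 * (NNReal.pi : ℝ≥0∞) := by
        rw [ENNReal.ofReal_mul (by positivity), ENNReal.ofReal_pow (by linarith),
          ← NNReal.coe_real_pi, ENNReal.ofReal_coe_nnreal]
      rw [← hball, ← ENNReal.ofReal_mul (by positivity)]
      refine ENNReal.ofReal_le_ofReal (le_of_eq ?_)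
      ring
    calc ENNReal.ofReal (∏ j ∈ Finset.range (kk n + 1), Δ j) * S n
        = ∑ F ∈ ffam n, ENNReal.ofReal (∏ j ∈ Finset.range (kk n + 1), Δ j) *
            wgt 𝒜 par (kk n + 1) F := by rw [hSdef, Finset.mul_sum]
      _ ≤ ∑ F ∈ ffam n, volume F := by
          refine Finset.sum_le_sum fun F hF => ?_
          exact wgt_le hdisj hnested hfin hcpt hpos hΔpos hdens hpar (hmemffam F hF).1
      _ ≤ _ := hvol
  -- step (b): per-element estimate
  have hstepB : ∀ n ∈ I', S n * ENNReal.ofReal Mc ≤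
      ENNReal.ofReal (4 * Real.pi) * ENNReal.ofReal (h (Metric.diam (V n))) := by
    intro n hnI'
    have htne : (t n).Nonempty := (Finset.mem_filter.1 hnI').2
    have hTpos : 0 < Metric.diam (V n) := hVdiam_pos n htne
    have hkkn := hkk n hTpos
    have hTε : Metric.diam (V n) < ε := lt_of_le_of_lt (hVδ' n) hδ'ε
    have hdkn_pos : 0 < d (kk n) := lt_of_lt_of_le hTpos hkkn.2.1
    have hdknε : d (kk n) < ε := (hk₀ _ hkkn.1).2
    have hgd : 0 ≤ g (d (kk n)) := hg_nonneg _ ⟨hdkn_pos, hdknε⟩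
    have hMc_le : Mc ≤ g (d (kk n)) * ∏ j ∈ Finset.range (kk n + 1), Δ j := (hk₀ _ hkkn.1).1
    have hreal : Metric.diam (V n) ^ 2 * g (d (kk n)) ≤ h (Metric.diam (V n)) := by
      rw [hht _ ⟨hTpos, hTε⟩]
      have hga := hg_anti ⟨hTpos, hTε⟩ ⟨hdkn_pos, hdknε⟩ hkkn.2.1
      nlinarith [sq_nonneg (Metric.diam (V n))]
    calc S n * ENNReal.ofReal Mc
        ≤ S n * ENNReal.ofReal (g (d (kk n)) * ∏ j ∈ Finset.range (kk n + 1), Δ j) :=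
          mul_le_mul_right (ENNReal.ofReal_le_ofReal hMc_le) _
      _ = (ENNReal.ofReal (∏ j ∈ Finset.range (kk n + 1), Δ j) * S n) *
            ENNReal.ofReal (g (d (kk n))) := by
          rw [ENNReal.ofReal_mul hgd]; ring
      _ ≤ (ENNReal.ofReal (4 * Real.pi) * ENNReal.ofReal (Metric.diam (V n) ^ 2)) *
            ENNReal.ofReal (g (d (kk n))) := mul_le_mul_left (hstepA n hnI') _
      _ = ENNReal.ofReal (4 * Real.pi) *
            ENNReal.ofReal (Metric.diam (V n) ^ 2 * g (d (kk n))) := by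
          rw [ENNReal.ofReal_mul (sq_nonneg _)]; ring
      _ ≤ _ := mul_le_mul_right (ENNReal.ofReal_le_ofReal hreal) _
  -- step (c): total mass lower bound
  have hstepC : volume F₀ ≤ ∑ n ∈ I', S n := by
    set m := I'.sup (fun n => kk n + 1) with hmdef
    have hmle : ∀ n ∈ I', kk n + 1 ≤ m := fun n hn => Finset.le_sup (f := fun n => kk n + 1) hn
    have hw0 : volume F₀ = wgt 𝒜 par 0 F₀ := rfl
    rw [hw0, ← wgt_sum_dsc hdisj hnested hfin hcpt hpos hΔpos hdens hpar hF₀ m (Nat.zero_le m)]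
    have hsubset : dsc hfin m F₀ ⊆
        I'.biUnion (fun n => (ffam n).biUnion (fun F => dsc hfin m F)) := by
      intro G hG
      have hGm := mem_dsc.1 hG
      obtain ⟨x, hxE, hxG⟩ :=
        E_inter_nonempty hdisj hnested hfin hcpt hpos hΔpos hdens hGm.1
      have hxV := hI' hxE
      simp only [Set.mem_iUnion, exists_prop] at hxV
      obtain ⟨n, hnI', hxVn⟩ := hxV
      have hxA : x ∈ ⋃₀ 𝒜 (kk n + 1) := Set.mem_iInter.1 hxE (kk n + 1)
      obtain ⟨F, hF, hxF⟩ := hxA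
      have hFf : F ∈ ffam n := by
        rw [hffamdef]
        simp only [Finset.mem_filter, Set.Finite.mem_toFinset]
        exact ⟨hF, ⟨x, hxF, hxVn⟩⟩
      have hGF : G ⊆ F :=
        subset_of_level_le hdisj hnested m (hmle n hnI') F hF G hGm.1 ⟨x, hxG, hxF⟩
      exact Finset.mem_biUnion.2 ⟨n, hnI',
        Finset.mem_biUnion.2 ⟨F, hFf, mem_dsc.2 ⟨hGm.1, hGF⟩⟩⟩
    calc ∑ G ∈ dsc hfin m F₀, wgt 𝒜 par m G
        ≤ ∑ G ∈ I'.biUnion (fun n => (ffam n).biUnion (fun F => dsc hfin m F)),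
            wgt 𝒜 par m G := Finset.sum_le_sum_of_subset hsubset
      _ ≤ ∑ n ∈ I', ∑ G ∈ (ffam n).biUnion (fun F => dsc hfin m F), wgt 𝒜 par m G :=
          sum_biUnion_le' _ _ _
      _ ≤ ∑ n ∈ I', ∑ F ∈ ffam n, ∑ G ∈ dsc hfin m F, wgt 𝒜 par m G :=
          Finset.sum_le_sum fun n _ => sum_biUnion_le' _ _ _
      _ = ∑ n ∈ I', S n := by
          refine Finset.sum_congr rfl fun n hn => ?_
          rw [hSdef]
          refine Finset.sum_congr rfl fun F hF => ?_
          have hFm : F ∈ 𝒜 (kk n + 1) := by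
            rw [hffamdef] at hF
            simp only [Finset.mem_filter, Set.Finite.mem_toFinset] at hF
            exact hF.1
          exact wgt_sum_dsc hdisj hnested hfin hcpt hpos hΔpos hdens hpar hFm m (hmle n hn)
  -- assembly
  have hπpos : (0:ℝ) < 4 * Real.pi := by positivity
  have h4π0 : ENNReal.ofReal (4 * Real.pi) ≠ 0 := (ENNReal.ofReal_pos.2 hπpos).ne'
  have h4πt : ENNReal.ofReal (4 * Real.pi) ≠ ∞ := ENNReal.ofReal_ne_top
  have htot : ENNReal.ofReal (4 * Real.pi) * ENNReal.ofReal (c + 3) ≤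
      ENNReal.ofReal (4 * Real.pi) * ∑ n ∈ I', ENNReal.ofReal (h (Metric.diam (V n))) := by
    have hvMc : v * Mc = 4 * Real.pi * (c + 3) := by
      rw [hMcdef]
      field_simp
    calc ENNReal.ofReal (4 * Real.pi) * ENNReal.ofReal (c + 3)
        = ENNReal.ofReal v * ENNReal.ofReal Mc := by
          rw [← ENNReal.ofReal_mul (by positivity), ← ENNReal.ofReal_mul hvpos.le, hvMc]
      _ = volume F₀ * ENNReal.ofReal Mc := by rw [hvdef, ENNReal.ofReal_toReal hvt]
      _ ≤ (∑ n ∈ I', S n) * ENNReal.ofReal Mc := mul_le_mul_left hstepC _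
      _ = ∑ n ∈ I', S n * ENNReal.ofReal Mc := Finset.sum_mul _ _ _
      _ ≤ ∑ n ∈ I', ENNReal.ofReal (4 * Real.pi) * ENNReal.ofReal (h (Metric.diam (V n))) :=
          Finset.sum_le_sum hstepB
      _ = _ := (Finset.mul_sum _ _ _).symm
  have hmain : ENNReal.ofReal (c + 3) ≤
      ∑ n ∈ I', ENNReal.ofReal (h (Metric.diam (V n))) :=
    (ENNReal.mul_le_mul_iff_right h4π0 h4πt).1 htot
  have hper : ∀ n ∈ I', ENNReal.ofReal (h (Metric.diam (V n))) ≤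
      ENNReal.ofReal (h (Metric.diam (t n))) + ENNReal.ofReal ((1 / 2 : ℝ) ^ n) := by
    intro n hn
    have hle1 : Metric.diam (t n) ≤ Metric.diam (V n) :=
      Metric.diam_mono (Metric.self_subset_thickening (hρpos n) _) (hVbounded n)
    have hle2 : Metric.diam (V n) ≤ Metric.diam (t n) + 2 * ρ n := hVdiam_le n
    have h1 : h (Metric.diam (V n)) ≤ h (Metric.diam (t n)) + (1 / 2) ^ n :=
      hρh n _ hle1 hle2
    exact le_trans (ENNReal.ofReal_le_ofReal h1) ENNReal.ofReal_add_le
  have hsum2 : ∑ n ∈ I', ENNReal.ofReal ((1 / 2 : ℝ) ^ n) ≤ 2 := by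
    refine le_trans (ENNReal.sum_le_tsum I') ?_
    have heqf : ∀ n : ℕ, ENNReal.ofReal ((1 / 2 : ℝ) ^ n) = (2 : ℝ≥0∞)⁻¹ ^ n := by
      intro n
      rw [ENNReal.ofReal_pow (by norm_num)]
      congr 1
      rw [show (1 / 2 : ℝ) = 2⁻¹ by norm_num]
      rw [ENNReal.ofReal_inv_of_pos (by norm_num)]
      norm_num
    rw [tsum_congr heqf, ENNReal.tsum_geometric, ENNReal.one_sub_inv_two]
    simp
  have hfinal : ENNReal.ofReal (c + 3) ≤
      (∑ n ∈ I', ENNReal.ofReal (h (Metric.diam (t n)))) + 2 := by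
    refine hmain.trans ?_
    calc ∑ n ∈ I', ENNReal.ofReal (h (Metric.diam (V n)))
        ≤ ∑ n ∈ I', (ENNReal.ofReal (h (Metric.diam (t n))) +
            ENNReal.ofReal ((1 / 2 : ℝ) ^ n)) := Finset.sum_le_sum hper
      _ = (∑ n ∈ I', ENNReal.ofReal (h (Metric.diam (t n)))) +
            ∑ n ∈ I', ENNReal.ofReal ((1 / 2 : ℝ) ^ n) := Finset.sum_add_distrib
      _ ≤ _ := add_le_add le_rfl hsum2
  have hc3 : ENNReal.ofReal c ≤ ∑ n ∈ I', ENNReal.ofReal (h (Metric.diam (t n))) := by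
    have h2 : ENNReal.ofReal (c + 3) - 2 ≤
        ∑ n ∈ I', ENNReal.ofReal (h (Metric.diam (t n))) := tsub_le_iff_right.2 hfinal
    refine le_trans ?_ h2
    rw [show (2:ℝ≥0∞) = ENNReal.ofReal 2 by norm_num,
      ← ENNReal.ofReal_sub _ (by norm_num)]
    exact ENNReal.ofReal_le_ofReal (by linarith)
  refine hc3.trans (le_trans ?_ (ENNReal.sum_le_tsum I'))
  refine Finset.sum_le_sum fun n hn => ?_
  have hnonemp : (t n).Nonempty := (Finset.mem_filter.1 hn).2
  rw [iSup_pos hnonemp]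
  exact le_rfl

end Main

end Stmt9Aux

/-- Lemma 3.3: a family satisfying the nesting conditions whose densities
and diameters are compatible with `g` yields a set of infinite `H^h`-measure for
`h(t) = t² g(t)`. -/
theorem stmt_9 (𝒜 : ℕ → Set (Set ℂ))
    (hfin : ∀ k, (𝒜 k).Finite) (hne : (𝒜 0).Nonempty)
    (hdisj : ∀ k, (𝒜 k).Pairwise Disjoint)
    (hcpt : ∀ k, ∀ F ∈ 𝒜 k, IsCompact F)
    (hconn : ∀ k, ∀ F ∈ 𝒜 k, IsConnected F)
    (hpos : ∀ k, ∀ F ∈ 𝒜 k, 0 < volume F)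
    (hnested : ∀ k, ∀ F ∈ 𝒜 (k + 1), ∃ F' ∈ 𝒜 k, F ⊆ F')
    (d : ℕ → ℝ) (hd_anti : Antitone d) (hd_lim : Tendsto d atTop (nhds 0))
    (hdiam : ∀ k, ∀ F ∈ 𝒜 k, Metric.diam F ≤ d k)
    (Δ : ℕ → ℝ) (hΔpos : ∀ k, 0 < Δ k)
    (hdens : ∀ k, ∀ F ∈ 𝒜 k, ENNReal.ofReal (Δ k) ≤ dens (⋃₀ 𝒜 (k + 1)) F)
    (ε : ℝ) (hε : 0 < ε) (g : ℝ → ℝ)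
    (hg_nonneg : ∀ t ∈ Set.Ioo 0 ε, 0 ≤ g t)
    (hg_anti : AntitoneOn g (Set.Ioo 0 ε))
    (hg_cont : ContinuousOn g (Set.Ioo 0 ε))
    (hmono : MonotoneOn (fun t => t ^ 2 * g t) (Set.Ioo 0 ε))
    (hlim0 : Tendsto (fun t => t ^ 2 * g t) (nhdsWithin 0 (Set.Ioi 0)) (nhds 0))
    (hdiv : Tendsto (fun k => g (d k) * ∏ j ∈ Finset.range (k + 1), Δ j) atTop atTop)
    (h : ℝ → ℝ) (hh0 : h 0 = 0) (hht : ∀ t ∈ Set.Ioo (0:ℝ) ε, h t = t ^ 2 * g t) :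
    (IsGaugeOn h ε ∧ ContinuousOn h (Set.Ico 0 ε)) ∧
      gaugeMeasure h (⋂ k, ⋃₀ 𝒜 k) = ∞ := by
  classical
  have hcont : ContinuousOn h (Set.Ico 0 ε) :=
    Stmt9Aux.gauge_continuousOn hg_cont hlim0 hh0 hht
  have hnonneg := Stmt9Aux.gauge_nonnegOn hg_nonneg hh0 hht
  have hmonoh := Stmt9Aux.gauge_monotoneOn hg_nonneg hmono hh0 hht
  have hrc := Stmt9Aux.gauge_right_continuous hε hcont
  refine ⟨⟨⟨hε, hh0, hnonneg, hmonoh, hrc⟩, hcont⟩, ?_⟩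
  set par : ℕ → Set ℂ → Set ℂ :=
    fun k F => if hF : ∃ F' ∈ 𝒜 k, F ⊆ F' then hF.choose else ∅ with hpardef
  have hpar : ∀ k, ∀ F ∈ 𝒜 (k + 1), par k F ∈ 𝒜 k ∧ F ⊆ par k F := by
    intro k F hF
    have hex := hnested k F hF
    simp only [hpardef, dif_pos hex]
    exact hex.choose_spec
  rw [gaugeMeasure]
  exact Stmt9Aux.measure_part hfin hne hdisj hcpt hpos hnested hd_anti hd_lim hdiam
    hΔpos hdens hε hg_nonneg hg_anti hdiv hh0 hht hmonoh hnonneg hrc par hpar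
end
end

section
/- Let U ⊆ ℂ be bounded and open, let f : U → ℂ be holomorphic with bounded distortion, and let A ⊆ U be Lebesgue-measurable. Then f(A) is Lebesgue-measurable and dens(A, U) ≤ D(f)²·dens(f(A), f(U)). -/
open MeasureTheory Filter Set Metric
open scoped ENNReal NNReal

noncomputable section

/-- The set of difference quotients `|f z − f w|/|z − w|` over pairs of distinct points of
`A`. -/
def ratioSet (f : ℂ → ℂ) (A : Set ℂ) : Set ℝ :=
  {q | ∃ z ∈ A, ∃ w ∈ A, z ≠ w ∧ q = dist (f z) (f w) / dist z w}

/-- `f` has bounded distortion on `A`: it is bilipschitz, i.e. the difference quotients are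
bounded above and bounded below away from `0`. -/
def HasBoundedDistortion (f : ℂ → ℂ) (A : Set ℂ) : Prop :=
  (∃ c > (0:ℝ), ∀ q ∈ ratioSet f A, c ≤ q) ∧ BddAbove (ratioSet f A)

/-- The distortion `D(f) = C_f / c_f` of `f` on `A`. -/
def distortion (f : ℂ → ℂ) (A : Set ℂ) : ℝ := sSup (ratioSet f A) / sInf (ratioSet f A)

/-- A `K`-Lipschitz map on a subset of `ℂ` increases planar measure by at most `K ^ 2`. -/
lemma volume_image_le_of_lipschitzOnWith {K : ℝ≥0} {f : ℂ → ℂ} {s : Set ℂ}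
    (h : LipschitzOnWith K f s) : volume (f '' s) ≤ (K : ℝ≥0∞) ^ 2 * volume s := by
  set d : ℝ := (Module.finrank ℝ ℂ : ℝ) with hd
  have hd2 : d = ((2 : ℕ) : ℝ) := by rw [hd, Complex.finrank_real_complex]
  have heq : (μH[d] : Measure ℂ) =
      Measure.addHaarScalarFactor (μH[d] : Measure ℂ) volume • volume :=
    MeasureTheory.Measure.isAddLeftInvariant_eq_smul _ _
  set c : ℝ≥0 := Measure.addHaarScalarFactor (μH[d] : Measure ℂ) volume with hc
  have hcpos : 0 < c := Measure.addHaarScalarFactor_pos_of_isAddHaarMeasure _ _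
  have him := h.hausdorffMeasure_image_le (show (0:ℝ) ≤ d by rw [hd2]; positivity)
  rw [heq] at him
  simp only [Measure.smul_apply, smul_eq_mul] at him
  have him2 : (c : ℝ≥0∞) * volume (f '' s) ≤ (c : ℝ≥0∞) * ((K : ℝ≥0∞) ^ 2 * volume s) := by
    calc (c : ℝ≥0∞) * volume (f '' s) ≤ (K : ℝ≥0∞) ^ d * ((c : ℝ≥0∞) * volume s) := him
      _ = (c : ℝ≥0∞) * ((K : ℝ≥0∞) ^ 2 * volume s) := by
          rw [hd2, ENNReal.rpow_natCast]; ring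
  exact (ENNReal.mul_le_mul_iff_right (by exact_mod_cast hcpos.ne') ENNReal.coe_ne_top).1 him2

/-- Lemma 2.5(c): a holomorphic map of bounded distortion on a bounded
open set maps measurable sets to measurable sets and distorts densities by at most the
square of the distortion. -/
theorem stmt_17 (U : Set ℂ) (hUopen : IsOpen U) (hUbdd : Bornology.IsBounded U)
    (f : ℂ → ℂ) (hdiff : DifferentiableOn ℂ f U)
    (hdist : HasBoundedDistortion f U)
    (A : Set ℂ) (hAU : A ⊆ U) (hA : NullMeasurableSet A volume) :
    NullMeasurableSet (f '' A) volume ∧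
      dens A U ≤ ENNReal.ofReal (distortion f U ^ 2) * dens (f '' A) (f '' U) := by
  obtain ⟨⟨c₀, hc₀, hlow⟩, hbdd⟩ := hdist
  rcases U.eq_empty_or_nonempty with hUe | hUne
  · have hAe : A = ∅ := eq_empty_of_subset_empty (hUe ▸ hAU)
    subst hAe
    refine ⟨by simp, ?_⟩
    simp [dens, hUe]
  -- `U` is nonempty open, hence the ratio set is nonempty
  obtain ⟨z₀, hz₀⟩ := hUne
  obtain ⟨r, hr, hball⟩ := Metric.isOpen_iff.1 hUopen z₀ hz₀
  have hz₁ : z₀ + (r / 2 : ℝ) ∈ U := by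
    apply hball
    rw [Metric.mem_ball, dist_eq_norm, add_sub_cancel_left, Complex.norm_real,
      Real.norm_eq_abs, abs_of_pos (by linarith)]
    linarith
  have hz₁ne : z₀ + (r / 2 : ℝ) ≠ z₀ := by
    intro h
    have : ((r / 2 : ℝ) : ℂ) = 0 := by linear_combination h
    have : (r / 2 : ℝ) = 0 := by exact_mod_cast this
    linarith
  have hRne : (ratioSet f U).Nonempty :=
    ⟨_, z₀ + (r / 2 : ℝ), hz₁, z₀, hz₀, hz₁ne, rfl⟩
  have hRbdd : BddBelow (ratioSet f U) := ⟨c₀, fun q hq => hlow q hq⟩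
  set cs : ℝ := sInf (ratioSet f U) with hcs
  set Cs : ℝ := sSup (ratioSet f U) with hCs
  have hcs_pos : 0 < cs := lt_of_lt_of_le hc₀ (le_csInf hRne hlow)
  have hcC : cs ≤ Cs := csInf_le_csSup hRne hRbdd hbdd
  have hCs_pos : 0 < Cs := lt_of_lt_of_le hcs_pos hcC
  -- pointwise bilipschitz bounds
  have hlow' : ∀ z ∈ U, ∀ w ∈ U, cs * dist z w ≤ dist (f z) (f w) := by
    intro z hz w hw
    rcases eq_or_ne z w with rfl | hne
    · simp
    · have hq : dist (f z) (f w) / dist z w ∈ ratioSet f U := ⟨z, hz, w, hw, hne, rfl⟩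
      have hdzw : 0 < dist z w := dist_pos.2 hne
      have := csInf_le hRbdd hq
      calc cs * dist z w ≤ dist (f z) (f w) / dist z w * dist z w := by
            exact mul_le_mul_of_nonneg_right this hdzw.le
        _ = dist (f z) (f w) := div_mul_cancel₀ _ hdzw.ne'
  have hupp' : ∀ z ∈ U, ∀ w ∈ U, dist (f z) (f w) ≤ Cs * dist z w := by
    intro z hz w hw
    rcases eq_or_ne z w with rfl | hne
    · simp
    · have hq : dist (f z) (f w) / dist z w ∈ ratioSet f U := ⟨z, hz, w, hw, hne, rfl⟩
      have hdzw : 0 < dist z w := dist_pos.2 hne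
      have := le_csSup hbdd hq
      calc dist (f z) (f w) = dist (f z) (f w) / dist z w * dist z w :=
            (div_mul_cancel₀ _ hdzw.ne').symm
        _ ≤ Cs * dist z w := mul_le_mul_of_nonneg_right this hdzw.le
  have hflip : LipschitzOnWith Cs.toNNReal f U := LipschitzOnWith.of_dist_le' hupp'
  have hinj : InjOn f U := by
    intro z hz w hw hfe
    by_contra hne
    have h1 := hlow' z hz w hw
    rw [hfe, dist_self] at h1
    have : dist z w ≤ 0 := nonpos_of_mul_nonpos_right ?_ hcs_pos
    · exact hne (dist_le_zero.1 this)
    · exact h1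
  -- the inverse map on `f '' U` is Lipschitz with constant `cs⁻¹`
  have hglip : LipschitzOnWith (cs⁻¹).toNNReal (Function.invFunOn f U) (f '' U) := by
    apply LipschitzOnWith.of_dist_le'
    rintro a ⟨z, hz, rfl⟩ b ⟨w, hw, rfl⟩
    rw [hinj.leftInvOn_invFunOn hz, hinj.leftInvOn_invFunOn hw]
    rw [inv_mul_eq_div, le_div_iff₀ hcs_pos, mul_comm]
    exact hlow' z hz w hw
  -- measure estimates
  have hvol_fA : volume A ≤ ((cs⁻¹).toNNReal : ℝ≥0∞) ^ 2 * volume (f '' A) := by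
    have := volume_image_le_of_lipschitzOnWith (hglip.mono (image_mono hAU))
    rwa [hinj.invFunOn_image hAU] at this
  have hvol_fU : volume U ≤ ((cs⁻¹).toNNReal : ℝ≥0∞) ^ 2 * volume (f '' U) := by
    have := volume_image_le_of_lipschitzOnWith (hglip.mono (le_refl (f '' U)))
    rwa [hinj.invFunOn_image (le_refl U)] at this
  have hvol_up : volume (f '' U) ≤ (Cs.toNNReal : ℝ≥0∞) ^ 2 * volume U :=
    volume_image_le_of_lipschitzOnWith hflip
  have hU_pos : 0 < volume U := hUopen.measure_pos volume ⟨z₀, hz₀⟩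
  have hU_fin : volume U < ∞ := hUbdd.measure_lt_top
  have hfU_fin : volume (f '' U) < ∞ :=
    lt_of_le_of_lt hvol_up
      (ENNReal.mul_lt_top (by simp [ENNReal.pow_lt_top, ENNReal.coe_lt_top]) hU_fin)
  have hfU_pos : 0 < volume (f '' U) := by
    by_contra h
    push_neg at h
    have h0 : volume (f '' U) = 0 := le_antisymm h zero_le
    rw [h0, mul_zero] at hvol_fU
    exact (lt_irrefl _ (lt_of_lt_of_le hU_pos hvol_fU)).elim
  -- measurability of `f '' A`
  obtain ⟨t, hts, htm, hteq⟩ := hA.exists_measurable_subset_ae_eq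
  have htU : t ⊆ U := hts.trans hAU
  have hAt_null : volume (A \ t) = 0 := (ae_eq_set.1 hteq).2
  have hftm : MeasurableSet (f '' t) :=
    htm.image_of_continuousOn_injOn (hdiff.continuousOn.mono htU) (hinj.mono htU)
  have hfAt_null : volume (f '' (A \ t)) = 0 := by
    have h1 : volume (f '' (A \ t)) ≤ (Cs.toNNReal : ℝ≥0∞) ^ 2 * volume (A \ t) :=
      volume_image_le_of_lipschitzOnWith (hflip.mono ((diff_subset (t := t)).trans hAU))
    rw [hAt_null, mul_zero] at h1
    exact le_antisymm h1 zero_le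
  have hA_split : f '' A = f '' t ∪ f '' (A \ t) := by
    rw [← image_union, union_diff_cancel hts]
  have hfA_nm : NullMeasurableSet (f '' A) volume := by
    rw [hA_split]
    exact hftm.nullMeasurableSet.union (NullMeasurableSet.of_null hfAt_null)
  refine ⟨hfA_nm, ?_⟩
  -- the density estimate
  have hAinter : A ∩ U = A := inter_eq_self_of_subset_left hAU
  have hfAinter : f '' A ∩ f '' U = f '' A :=
    inter_eq_self_of_subset_left (image_mono hAU)
  rw [dens, dens, hAinter, hfAinter]
  set K2 : ℝ≥0∞ := (Cs.toNNReal : ℝ≥0∞) ^ 2 with hK2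
  set k2 : ℝ≥0∞ := ((cs⁻¹).toNNReal : ℝ≥0∞) ^ 2 with hk2
  have hD : ENNReal.ofReal (distortion f U ^ 2) = K2 * k2 := by
    rw [distortion, ← hcs, ← hCs, div_pow, div_eq_mul_inv, ← inv_pow,
      ENNReal.ofReal_mul (by positivity), hK2, hk2,
      ENNReal.ofReal_pow hCs_pos.le, ENNReal.ofReal_pow (by positivity)]
    rfl
  rw [hD]
  set a := volume A
  set u := volume U
  set m := volume (f '' A)
  set v := volume (f '' U)
  have hmain : a * v ≤ k2 * m * (K2 * u) := mul_le_mul' hvol_fA hvol_up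
  rw [ENNReal.div_le_iff_le_mul (Or.inl hU_pos.ne') (Or.inl hU_fin.ne), div_eq_mul_inv]
  have hv : v * v⁻¹ = 1 := ENNReal.mul_inv_cancel hfU_pos.ne' hfU_fin.ne
  calc a = a * v * v⁻¹ := by rw [mul_assoc, hv, mul_one]
    _ ≤ k2 * m * (K2 * u) * v⁻¹ := mul_le_mul_left hmain _
    _ = K2 * k2 * (m * v⁻¹) * u := by ring
end
end

section
/- Let λ ∈ ℂ \ {0}, λ' ∈ (0, 1/e), γ > 0 and R > 0. If H^{h_{λ',γ}}(I_R(E_λ)) = 0, then H^{h_{λ',γ}}(I(E_λ)) = 0. -/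
open MeasureTheory Filter Set Metric
open scoped ENNReal

noncomputable section

/-- The exponential map `E_λ(z) = λ·exp z`. -/
def expMap (lam : ℂ) : ℂ → ℂ := fun z => lam * Complex.exp z

/-- The Fatou set: points possessing a neighborhood on which the iterates are equicontinuous. -/
def fatouSet (f : ℂ → ℂ) : Set ℂ :=
  {z | ∃ U ∈ nhds z, EquicontinuousOn (fun n : ℕ => f^[n]) U}

/-- The Julia set: the complement of the Fatou set. -/
def juliaSet (f : ℂ → ℂ) : Set ℂ := (fatouSet f)ᶜ

/-- The escaping set. -/
def escapingSet (f : ℂ → ℂ) : Set ℂ :=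
  {z | Tendsto (fun n : ℕ => ‖f^[n] z‖) atTop atTop}

/-- `I_R(E_λ)`: escaping points all of whose iterates have real part at least `R`. -/
def escapingSetGE (lam : ℂ) (R : ℝ) : Set ℂ :=
  {z ∈ escapingSet (expMap lam) | ∀ n : ℕ, R ≤ ((expMap lam)^[n] z).re}

section PhiLemmas

variable {lam' beta : ℝ} {Phi : ℝ → ℝ}

lemma logIter_bounds (hl : 0 < lam') (hbeta : 1 < beta)
    (hfix : lam' * Real.exp beta = beta) :
    ∀ n : ℕ, ∀ x y : ℝ, beta ≤ x → x ≤ y →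
      beta ≤ (fun y => Real.log (y / lam'))^[n] x ∧
      (fun y => Real.log (y / lam'))^[n] x ≤ (fun y => Real.log (y / lam'))^[n] y := by
  set L : ℝ → ℝ := fun y => Real.log (y / lam') with hL
  have hLbeta : L beta = beta := by
    have hexp : Real.exp beta = beta / lam' := by
      field_simp [hl.ne'] at hfix ⊢
      linarith [hfix]
    simp only [hL, ← hexp, Real.log_exp]
  have hmono : ∀ x y : ℝ, beta ≤ x → x ≤ y → beta ≤ L x ∧ L x ≤ L y := by
    intro x y hx hxy
    have hx0 : 0 < x / lam' := div_pos (by linarith) hl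
    constructor
    · rw [← hLbeta]
      exact Real.log_le_log (div_pos (by linarith) hl) (by gcongr)
    · exact Real.log_le_log hx0 (by gcongr)
  intro n
  induction n with
  | zero => intro x y hx hxy; exact ⟨hx, hxy⟩
  | succ n ih =>
    intro x y hx hxy
    obtain ⟨h1, h2⟩ := ih x y hx hxy
    simp only [Function.iterate_succ_apply']
    exact hmono _ _ h1 h2

lemma Phi_nonneg (hl : 0 < lam') (hbeta : 1 < beta)
    (hfix : lam' * Real.exp beta = beta)
    (hPhi : ∀ x : ℝ, beta ≤ x →
      Tendsto (fun n : ℕ => beta ^ n * ((fun y => Real.log (y / lam'))^[n] x - beta))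
        atTop (nhds (Phi x)))
    {x : ℝ} (hx : beta ≤ x) : 0 ≤ Phi x := by
  refine ge_of_tendsto (hPhi x hx) (Eventually.of_forall fun n => ?_)
  have := (logIter_bounds hl hbeta hfix n x x hx le_rfl).1
  have hb : (0:ℝ) ≤ beta ^ n := pow_nonneg (by linarith) n
  nlinarith

lemma Phi_mono (hl : 0 < lam') (hbeta : 1 < beta)
    (hfix : lam' * Real.exp beta = beta)
    (hPhi : ∀ x : ℝ, beta ≤ x →
      Tendsto (fun n : ℕ => beta ^ n * ((fun y => Real.log (y / lam'))^[n] x - beta))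
        atTop (nhds (Phi x)))
    {x y : ℝ} (hx : beta ≤ x) (hxy : x ≤ y) : Phi x ≤ Phi y := by
  refine le_of_tendsto_of_tendsto' (hPhi x hx) (hPhi y (hx.trans hxy)) fun n => ?_
  obtain ⟨h1, h2⟩ := logIter_bounds hl hbeta hfix n x y hx hxy
  have hb : (0:ℝ) ≤ beta ^ n := pow_nonneg (by linarith) n
  nlinarith

end PhiLemmas

lemma gauge_bound {beta gamma : ℝ} {Phi h : ℝ → ℝ}
    (hbeta : 1 < beta) (hgamma : 0 < gamma)
    (hmono : ∀ x y : ℝ, beta ≤ x → x ≤ y → Phi x ≤ Phi y)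
    (hnonneg : ∀ x : ℝ, beta ≤ x → 0 ≤ Phi x)
    (hh : ∀ t : ℝ, 0 < t → beta ≤ 1 / t → h t = t ^ 2 * Phi (1 / t) ^ gamma)
    {a₀ t s : ℝ} (ha₀ : 1 ≤ a₀) (ht : 0 < t) (hts : t ≤ s) (hsa : s ≤ a₀ * t)
    (hsd : s ≤ 1 / beta) :
    ENNReal.ofReal (h s) ≤ ENNReal.ofReal (a₀ ^ 2) * ENNReal.ofReal (h t) := by
  have hb0 : (0:ℝ) < beta := by linarith
  have hs0 : 0 < s := ht.trans_le hts
  have hbs : beta ≤ 1 / s := (le_div_iff₀ hs0).2 (by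
    calc beta * s ≤ beta * (1 / beta) := by gcongr
      _ = 1 := mul_one_div_cancel hb0.ne')
  have hbt : beta ≤ 1 / t := hbs.trans (by gcongr)
  have hPs := hnonneg _ hbs
  have hPle : Phi (1 / s) ≤ Phi (1 / t) := hmono _ _ hbs (by gcongr)
  have hrp : Phi (1 / s) ^ gamma ≤ Phi (1 / t) ^ gamma :=
    Real.rpow_le_rpow hPs hPle hgamma.le
  have hrp0 : 0 ≤ Phi (1 / s) ^ gamma := Real.rpow_nonneg hPs _
  have key : h s ≤ a₀ ^ 2 * h t := by
    rw [hh s hs0 hbs, hh t ht hbt]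
    have hsq : s ^ 2 ≤ a₀ ^ 2 * t ^ 2 := by nlinarith
    calc s ^ 2 * Phi (1 / s) ^ gamma ≤ (a₀ ^ 2 * t ^ 2) * Phi (1 / t) ^ gamma := by
          apply mul_le_mul hsq hrp hrp0 (by positivity)
      _ = a₀ ^ 2 * (t ^ 2 * Phi (1 / t) ^ gamma) := by ring
  calc ENNReal.ofReal (h s) ≤ ENNReal.ofReal (a₀ ^ 2 * h t) := ENNReal.ofReal_le_ofReal key
    _ = ENNReal.ofReal (a₀ ^ 2) * ENNReal.ofReal (h t) :=
        ENNReal.ofReal_mul (by positivity)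

/-- Pullback of a gauge-null set under a co-Lipschitz map on a set `S` is gauge-null,
provided the gauge satisfies a scaling bound. -/
lemma pullback_null (h : ℝ → ℝ) (hh0 : h 0 = 0)
    (C : ℝ≥0∞) (hC : C ≠ ∞) (a₀ δ₀ : ℝ) (ha₀ : 1 ≤ a₀) (hδ₀ : 0 < δ₀)
    (hgauge : ∀ t s : ℝ, 0 < t → t ≤ s → s ≤ a₀ * t → s ≤ δ₀ →
      ENNReal.ofReal (h s) ≤ C * ENNReal.ofReal (h t))
    (f : ℂ → ℂ) (S : Set ℂ) (c : ℝ) (hc : 0 < c) (hca : 2 * max 1 (1 / c) ≤ a₀)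
    (hco : ∀ z ∈ S, ∀ w ∈ S, c * dist z w ≤ dist (f z) (f w))
    (A : Set ℂ) (hA : gaugeMeasure h A = 0) :
    gaugeMeasure h (S ∩ f ⁻¹' A) = 0 := by
  have ha₀0 : 0 < a₀ := lt_of_lt_of_le one_pos ha₀
  -- main estimate
  have main : ∀ ε : ℝ≥0∞, 0 < ε → gaugeMeasure h (S ∩ f ⁻¹' A) ≤ C * ε := by
    intro ε hε
    rw [gaugeMeasure, Measure.mkMetric_apply]
    refine iSup₂_le fun ρ hρ => ?_
    -- choose a real scale δ
    set δ : ℝ := min (δ₀ / a₀) ((min 1 ρ).toReal / a₀) with hδdef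
    have hmin1ρ : (0:ℝ≥0∞) < min 1 ρ := lt_min one_pos hρ
    have hmintop : min 1 ρ ≠ ∞ := (lt_of_le_of_lt (min_le_left _ _) (by norm_num)).ne
    have hδpos : 0 < δ := lt_min (div_pos hδ₀ ha₀0)
      (div_pos (ENNReal.toReal_pos hmin1ρ.ne' hmintop) ha₀0)
    -- extract a cover of A at scale δ with small sum
    have hA' := hA
    rw [gaugeMeasure, Measure.mkMetric_apply] at hA'
    have hinf : (⨅ (t : ℕ → Set ℂ) (_ : A ⊆ iUnion t)
        (_ : ∀ n, EMetric.diam (t n) ≤ ENNReal.ofReal δ),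
        ∑' n, ⨆ _ : (t n).Nonempty,
          ENNReal.ofReal (h (EMetric.diam (t n)).toReal)) = 0 := by
      refine le_antisymm ?_ zero_le
      rw [← hA']
      refine le_iSup₂_of_le (ENNReal.ofReal δ) (by positivity) le_rfl
    have hltε : (⨅ (t : ℕ → Set ℂ) (_ : A ⊆ iUnion t)
        (_ : ∀ n, EMetric.diam (t n) ≤ ENNReal.ofReal δ),
        ∑' n, ⨆ _ : (t n).Nonempty,
          ENNReal.ofReal (h (EMetric.diam (t n)).toReal)) < ε := hinf ▸ hε
    simp only [iInf_lt_iff] at hltε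
    obtain ⟨U, hUcov, hUdiam, hUsum⟩ := hltε
    -- define the pulled-back enlarged cover
    set t : ℕ → ℝ := fun n => (EMetric.diam (U n)).toReal with htdef
    have ht0 : ∀ n, 0 ≤ t n := fun n => ENNReal.toReal_nonneg
    have htδ : ∀ n, t n ≤ δ := fun n =>
      ENNReal.toReal_le_of_le_ofReal hδpos.le (hUdiam n)
    set b : ℕ → ℝ := fun n => max (t n) (t n / c) with hbdef
    have hb0 : ∀ n, 0 ≤ b n := fun n => le_trans (ht0 n) (le_max_left _ _)
    have htb : ∀ n, t n ≤ b n := fun n => le_max_left _ _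
    have hba : ∀ n, 2 * b n ≤ a₀ * t n := by
      intro n
      have : b n = t n * max 1 (1 / c) := by
        rw [hbdef]
        rw [mul_max_of_nonneg _ _ (ht0 n), mul_one, mul_one_div]
      rw [this]
      calc 2 * (t n * max 1 (1 / c)) = (2 * max 1 (1 / c)) * t n := by ring
        _ ≤ a₀ * t n := mul_le_mul_of_nonneg_right hca (ht0 n)
    set V : ℕ → Set ℂ := fun n => S ∩ f ⁻¹' (U n) with hVdef
    set W : ℕ → Set ℂ := fun n => V n ∪ (fun z => z + (b n : ℂ)) '' V n with hWdef
    -- distances within V n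
    have hVd : ∀ n, ∀ z ∈ V n, ∀ w ∈ V n, dist z w ≤ t n / c := by
      intro n z hz w hw
      have h1 : c * dist z w ≤ dist (f z) (f w) := hco z hz.1 w hw.1
      have h2 : dist (f z) (f w) ≤ t n := by
        rw [dist_edist]
        exact ENNReal.toReal_mono
          (lt_of_le_of_lt (hUdiam n) ENNReal.ofReal_lt_top).ne
          (EMetric.edist_le_diam_of_mem hz.2 hw.2)
      rw [le_div_iff₀ hc, mul_comm]
      exact h1.trans h2
    -- diameter of W n
    have hWdist : ∀ n, ∀ x ∈ W n, ∀ y ∈ W n, dist x y ≤ 2 * b n := by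
      intro n x hx y hy
      have hdb : ∀ u : ℂ, dist u (u + (b n : ℂ)) = b n := by
        intro u
        rw [dist_self_add_right, Complex.norm_real, Real.norm_eq_abs,
          abs_of_nonneg (hb0 n)]
      have hVb : ∀ z ∈ V n, ∀ w ∈ V n, dist z w ≤ b n :=
        fun z hz w hw => (hVd n z hz w hw).trans (le_max_right _ _)
      rcases hx with hx | ⟨u, hu, rfl⟩ <;> rcases hy with hy | ⟨v, hv, rfl⟩
      · exact (hVb _ hx _ hy).trans (by linarith [hb0 n])
      · calc dist x (v + (b n : ℂ)) ≤ dist x v + dist v (v + (b n : ℂ)) := dist_triangle _ _ _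
          _ ≤ b n + b n := add_le_add (hVb _ hx _ hv) (hdb v).le
          _ = 2 * b n := by ring
      · calc dist (u + (b n : ℂ)) y ≤ dist (u + (b n : ℂ)) u + dist u y := dist_triangle _ _ _
          _ ≤ b n + b n := add_le_add (by rw [dist_comm]; exact (hdb u).le) (hVb _ hu _ hy)
          _ = 2 * b n := by ring
      · rw [dist_add_right]
        exact (hVb _ hu _ hv).trans (by linarith [hb0 n])
    have hWdiam : ∀ n, EMetric.diam (W n) ≤ ENNReal.ofReal (2 * b n) := by
      intro n
      refine EMetric.diam_le fun x hx y hy => ?_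
      rw [edist_dist]
      exact ENNReal.ofReal_le_ofReal (hWdist n x hx y hy)
    -- W covers S ∩ f⁻¹' A
    have hWcov : S ∩ f ⁻¹' A ⊆ ⋃ n, W n := by
      intro z hz
      obtain ⟨n, hn⟩ := mem_iUnion.mp (hUcov hz.2)
      exact mem_iUnion.mpr ⟨n, Or.inl ⟨hz.1, hn⟩⟩
    -- diam W n ≤ ρ
    have hWρ : ∀ n, EMetric.diam (W n) ≤ ρ := by
      intro n
      refine (hWdiam n).trans ?_
      have h1 : 2 * b n ≤ (min 1 ρ).toReal := by
        calc 2 * b n ≤ a₀ * t n := hba n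
          _ ≤ a₀ * ((min 1 ρ).toReal / a₀) := by
              gcongr
              exact (htδ n).trans (min_le_right _ _)
          _ = (min 1 ρ).toReal := by field_simp
      calc ENNReal.ofReal (2 * b n) ≤ ENNReal.ofReal ((min 1 ρ).toReal) :=
            ENNReal.ofReal_le_ofReal h1
        _ = min 1 ρ := ENNReal.ofReal_toReal hmintop
        _ ≤ ρ := min_le_right _ _
    -- per-term bound
    have hterm : ∀ n, (⨆ _ : (W n).Nonempty,
        ENNReal.ofReal (h (EMetric.diam (W n)).toReal)) ≤
        C * ⨆ _ : (U n).Nonempty, ENNReal.ofReal (h (EMetric.diam (U n)).toReal) := by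
      intro n
      refine iSup_le fun hW => ?_
      have hVne : (V n).Nonempty := by
        rcases hW with ⟨x, hx | ⟨u, hu, rfl⟩⟩
        exacts [⟨x, hx⟩, ⟨u, hu⟩]
      have hUne : (U n).Nonempty := ⟨f hVne.choose, hVne.choose_spec.2⟩
      rw [iSup_pos hUne]
      set s : ℝ := (EMetric.diam (W n)).toReal with hsdef
      rcases eq_or_lt_of_le (ht0 n) with htz | htz
      · -- t n = 0 : everything degenerate
        have hbz : b n = 0 := by
          rw [hbdef]; simp [← htz, (zero_div c)]
        have : EMetric.diam (W n) = 0 := le_antisymm (by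
          simpa [hbz] using hWdiam n) zero_le
        rw [hsdef, this]
        simp [hh0]
      · -- t n > 0
        have hWfin : EMetric.diam (W n) ≠ ∞ :=
          (lt_of_le_of_lt (hWdiam n) ENNReal.ofReal_lt_top).ne
        have hs2b : s ≤ 2 * b n :=
          ENNReal.toReal_le_of_le_ofReal (by positivity) (hWdiam n)
        have hbs : b n ≤ s := by
          obtain ⟨x, hx⟩ := hVne
          have hx1 : x ∈ W n := Or.inl hx
          have hx2 : x + (b n : ℂ) ∈ W n := Or.inr ⟨x, hx, rfl⟩
          have : ENNReal.ofReal (b n) ≤ EMetric.diam (W n) := by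
            have := EMetric.edist_le_diam_of_mem hx1 hx2
            rwa [edist_dist, dist_self_add_right, Complex.norm_real,
              Real.norm_eq_abs, abs_of_nonneg (hb0 n)] at this
          calc b n = (ENNReal.ofReal (b n)).toReal := (ENNReal.toReal_ofReal (hb0 n)).symm
            _ ≤ s := ENNReal.toReal_mono hWfin this
        have hts' : t n ≤ s := (htb n).trans hbs
        have hsa : s ≤ a₀ * t n := hs2b.trans (hba n)
        have hsδ₀ : s ≤ δ₀ := by
          calc s ≤ a₀ * t n := hsa
            _ ≤ a₀ * (δ₀ / a₀) := by gcongr; exact (htδ n).trans (min_le_left _ _)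
            _ = δ₀ := by field_simp
        exact hgauge (t n) s htz hts' hsa hsδ₀
    -- conclude
    refine le_trans (iInf_le_of_le W (iInf_le_of_le hWcov (iInf_le_of_le hWρ le_rfl))) ?_
    calc (∑' n, ⨆ _ : (W n).Nonempty, ENNReal.ofReal (h (EMetric.diam (W n)).toReal))
        ≤ ∑' n, C * ⨆ _ : (U n).Nonempty,
            ENNReal.ofReal (h (EMetric.diam (U n)).toReal) := ENNReal.tsum_le_tsum hterm
      _ = C * ∑' n, ⨆ _ : (U n).Nonempty,
            ENNReal.ofReal (h (EMetric.diam (U n)).toReal) := ENNReal.tsum_mul_left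
      _ ≤ C * ε := mul_le_mul_right hUsum.le _
  -- now conclude measure is zero
  by_contra hne
  have h1 : gaugeMeasure h (S ∩ f ⁻¹' A) ≤ C := by
    simpa using main 1 one_pos
  have hfin : gaugeMeasure h (S ∩ f ⁻¹' A) ≠ ∞ := (lt_of_le_of_lt h1 hC.lt_top).ne
  have h2 := main (gaugeMeasure h (S ∩ f ⁻¹' A) / (2 * C)) ?_
  · have hC0 : C ≠ 0 := by
      intro h0
      exact hne (le_antisymm (by simpa [h0] using h1) zero_le)
    have : C * (gaugeMeasure h (S ∩ f ⁻¹' A) / (2 * C)) =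
        gaugeMeasure h (S ∩ f ⁻¹' A) / 2 := by
      rw [ENNReal.div_eq_inv_mul, ENNReal.mul_inv (Or.inl (by norm_num)) (Or.inl (by norm_num)),
        ENNReal.div_eq_inv_mul]
      calc C * (2⁻¹ * C⁻¹ * gaugeMeasure h (S ∩ f ⁻¹' A))
          = (C * C⁻¹) * (2⁻¹ * gaugeMeasure h (S ∩ f ⁻¹' A)) := by ring
        _ = 2⁻¹ * gaugeMeasure h (S ∩ f ⁻¹' A) := by
            rw [ENNReal.mul_inv_cancel hC0 hC, one_mul]
    rw [this] at h2
    exact absurd h2 (not_le.mpr (ENNReal.half_lt_self hne hfin))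
  · exact ENNReal.div_pos hne (ENNReal.mul_ne_top (by norm_num) hC)

lemma expMap_coLip (lam : ℂ) (hlam : lam ≠ 0) (z₀ : ℂ) :
    ∀ z ∈ closedBall z₀ 4⁻¹, ∀ w ∈ closedBall z₀ 4⁻¹,
      (‖lam‖ * Real.exp (z₀.re - 4⁻¹) / 2) * dist z w ≤
        dist (expMap lam z) (expMap lam w) := by
  intro z hz w hw
  have hzw : dist z w ≤ 2⁻¹ := by
    calc dist z w ≤ dist z z₀ + dist z₀ w := dist_triangle _ _ _
      _ ≤ 4⁻¹ + 4⁻¹ := add_le_add (mem_closedBall.mp hz)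
          (by rw [dist_comm]; exact mem_closedBall.mp hw)
      _ = 2⁻¹ := by norm_num
  set u : ℂ := z - w with hu
  have hau : ‖u‖ ≤ 2⁻¹ := by rwa [hu, ← Complex.dist_eq]
  have hfact : expMap lam z - expMap lam w = lam * Complex.exp w * (Complex.exp u - 1) := by
    have hze : Complex.exp z = Complex.exp w * Complex.exp u := by
      rw [← Complex.exp_add, hu]
      congr 1
      ring
    simp only [expMap]
    rw [hze]
    ring
  have hexp1 : ‖u‖ / 2 ≤ ‖Complex.exp u - 1‖ := by
    have hb : ‖Complex.exp u - 1 - u‖ ≤ ‖u‖ ^ 2 :=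
      Complex.norm_exp_sub_one_sub_id_le (by linarith)
    have htri : ‖u‖ - ‖Complex.exp u - 1 - u‖ ≤
        ‖Complex.exp u - 1‖ := by
      have h4 : u = (Complex.exp u - 1) - (Complex.exp u - 1 - u) := by ring
      calc ‖u‖ - ‖Complex.exp u - 1 - u‖
          = ‖(Complex.exp u - 1) - (Complex.exp u - 1 - u)‖ -
            ‖Complex.exp u - 1 - u‖ := by rw [← h4]
        _ ≤ (‖Complex.exp u - 1‖ + ‖Complex.exp u - 1 - u‖) -
            ‖Complex.exp u - 1 - u‖ := by
              have := norm_sub_le (Complex.exp u - 1) (Complex.exp u - 1 - u)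
              linarith
        _ = ‖Complex.exp u - 1‖ := by ring
    nlinarith [norm_nonneg u]
  have hrew : w.re ≥ z₀.re - 4⁻¹ := by
    have h1 : |(w - z₀).re| ≤ ‖w - z₀‖ := Complex.abs_re_le_norm _
    have h2 : ‖w - z₀‖ ≤ 4⁻¹ := by rwa [← Complex.dist_eq, ← mem_closedBall]
    have := abs_le.mp (h1.trans h2)
    simp only [Complex.sub_re] at this
    linarith [this.1]
  have hexpw : Real.exp (z₀.re - 4⁻¹) ≤ ‖Complex.exp w‖ := by
    rw [Complex.norm_exp]
    exact Real.exp_le_exp.mpr hrew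
  have hdre : dist (expMap lam z) (expMap lam w) =
      ‖lam * Complex.exp w * (Complex.exp u - 1)‖ := by
    rw [dist_eq_norm, hfact]
  have hdzw : dist z w = ‖u‖ := by rw [hu, Complex.dist_eq]
  rw [hdre, hdzw]
  calc ‖lam‖ * Real.exp (z₀.re - 4⁻¹) / 2 * ‖u‖
      ≤ ‖lam‖ * ‖Complex.exp w‖ * (‖u‖ / 2) := by
        rw [div_mul_eq_mul_div, mul_div_assoc]
        gcongr
      _ ≤ ‖lam‖ * ‖Complex.exp w‖ * ‖Complex.exp u - 1‖ := by
        gcongr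
      _ = ‖lam * Complex.exp w * (Complex.exp u - 1)‖ := by
        rw [norm_mul, norm_mul]

lemma lattice_cover : (univ : Set ℂ) ⊆
    ⋃ j : ℤ × ℤ, closedBall (((j.1 : ℝ) / 4 : ℝ) + ((j.2 : ℝ) / 4 : ℝ) * Complex.I) 4⁻¹ := by
  intro z _
  refine mem_iUnion.mpr ⟨(round (4 * z.re), round (4 * z.im)), ?_⟩
  set p : ℤ := round (4 * z.re)
  set q : ℤ := round (4 * z.im)
  set ctr : ℂ := ((p : ℝ) / 4 : ℝ) + ((q : ℝ) / 4 : ℝ) * Complex.I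
  have hre : (z - ctr).re = z.re - (p : ℝ) / 4 := by
    simp [ctr, Complex.sub_re, Complex.add_re, Complex.ofReal_re, Complex.mul_re,
      Complex.I_re, Complex.I_im, Complex.ofReal_im]
  have him : (z - ctr).im = z.im - (q : ℝ) / 4 := by
    simp [ctr, Complex.sub_im, Complex.add_im, Complex.ofReal_im, Complex.mul_im,
      Complex.I_re, Complex.I_im, Complex.ofReal_re]
  have h1 : |4 * z.re - (p : ℝ)| ≤ 1 / 2 := abs_sub_round (4 * z.re)
  have h2 : |4 * z.im - (q : ℝ)| ≤ 1 / 2 := abs_sub_round (4 * z.im)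
  have h1' : |(z - ctr).re| ≤ 1 / 8 := by
    rw [hre]
    have : z.re - (p : ℝ) / 4 = (4 * z.re - (p : ℝ)) / 4 := by ring
    rw [this, abs_div]
    rw [abs_of_pos (by norm_num : (0:ℝ) < 4)]
    linarith
  have h2' : |(z - ctr).im| ≤ 1 / 8 := by
    rw [him]
    have : z.im - (q : ℝ) / 4 = (4 * z.im - (q : ℝ)) / 4 := by ring
    rw [this, abs_div, abs_of_pos (by norm_num : (0:ℝ) < 4)]
    linarith
  rw [mem_closedBall, dist_eq_norm]
  calc ‖z - ctr‖ ≤ |(z - ctr).re| + |(z - ctr).im| :=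
      Complex.norm_le_abs_re_add_abs_im _
    _ ≤ 1 / 8 + 1 / 8 := add_le_add h1' h2'
    _ ≤ 4⁻¹ := by norm_num

lemma expMap_preimage_null (lam : ℂ) (hlam : lam ≠ 0) {beta gamma : ℝ} {Phi h : ℝ → ℝ}
    (hbeta : 1 < beta) (hgamma : 0 < gamma)
    (hmono : ∀ x y : ℝ, beta ≤ x → x ≤ y → Phi x ≤ Phi y)
    (hnonneg : ∀ x : ℝ, beta ≤ x → 0 ≤ Phi x)
    (hh : ∀ t : ℝ, 0 < t → beta ≤ 1 / t → h t = t ^ 2 * Phi (1 / t) ^ gamma)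
    (hh0 : h 0 = 0)
    (A : Set ℂ) (hA : gaugeMeasure h A = 0) :
    gaugeMeasure h (expMap lam ⁻¹' A) = 0 := by
  have hcover : expMap lam ⁻¹' A ⊆
      ⋃ j : ℤ × ℤ, (closedBall (((j.1 : ℝ) / 4 : ℝ) + ((j.2 : ℝ) / 4 : ℝ) * Complex.I) 4⁻¹ ∩
        expMap lam ⁻¹' A) := by
    intro z hz
    obtain ⟨s, ⟨j, rfl⟩, hj⟩ := lattice_cover (mem_univ z)
    exact mem_iUnion.mpr ⟨j, hj, hz⟩
  refine measure_mono_null hcover (measure_iUnion_null fun j => ?_)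
  set z₀ : ℂ := ((j.1 : ℝ) / 4 : ℝ) + ((j.2 : ℝ) / 4 : ℝ) * Complex.I with hz₀
  set c : ℝ := ‖lam‖ * Real.exp (z₀.re - 4⁻¹) / 2 with hcdef
  have hc : 0 < c := div_pos (mul_pos (norm_pos_iff.mpr hlam) (Real.exp_pos _)) two_pos
  set a₀ : ℝ := 2 * max 1 (1 / c) with ha₀def
  have ha₀ : 1 ≤ a₀ := by
    have : (1:ℝ) ≤ max 1 (1 / c) := le_max_left _ _
    nlinarith
  exact pullback_null h hh0 (ENNReal.ofReal (a₀ ^ 2)) ENNReal.ofReal_ne_top a₀ (1 / beta)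
    ha₀ (one_div_pos.mpr (by linarith))
    (fun t s ht hts hsa hsd => gauge_bound hbeta hgamma hmono hnonneg hh ha₀ ht hts hsa hsd)
    (expMap lam) (closedBall z₀ 4⁻¹) c hc le_rfl (expMap_coLip lam hlam z₀) A hA

lemma iter_preimage_null (lam : ℂ) (hlam : lam ≠ 0) {beta gamma : ℝ} {Phi h : ℝ → ℝ}
    (hbeta : 1 < beta) (hgamma : 0 < gamma)
    (hmono : ∀ x y : ℝ, beta ≤ x → x ≤ y → Phi x ≤ Phi y)
    (hnonneg : ∀ x : ℝ, beta ≤ x → 0 ≤ Phi x)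
    (hh : ∀ t : ℝ, 0 < t → beta ≤ 1 / t → h t = t ^ 2 * Phi (1 / t) ^ gamma)
    (hh0 : h 0 = 0) (N : ℕ) :
    ∀ A : Set ℂ, gaugeMeasure h A = 0 → gaugeMeasure h ((expMap lam)^[N] ⁻¹' A) = 0 := by
  induction N with
  | zero => intro A hA; simpa using hA
  | succ n ih =>
    intro A hA
    rw [Function.iterate_succ, Set.preimage_comp]
    exact expMap_preimage_null lam hlam hbeta hgamma hmono hnonneg hh hh0 _
      (ih A hA)


/-- Lemma 4.3: if `H^{h_{λ',γ}}(I_R(E_λ)) = 0` then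
`H^{h_{λ',γ}}(I(E_λ)) = 0`. -/
theorem stmt_18 (lam : ℂ) (hlam : lam ≠ 0)
    (lam' : ℝ) (hlam' : lam' ∈ Set.Ioo 0 (1 / Real.exp 1))
    (beta : ℝ) (hbeta : 1 < beta) (hfix : lam' * Real.exp beta = beta)
    (Phi : ℝ → ℝ)
    (hPhi : ∀ x : ℝ, beta ≤ x →
      Tendsto (fun n : ℕ => beta ^ n * ((fun y => Real.log (y / lam'))^[n] x - beta))
        atTop (nhds (Phi x)))
    (gamma : ℝ) (hgamma : 0 < gamma) (R : ℝ) (hR : 0 < R)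
    (h : ℝ → ℝ) (hh0 : h 0 = 0)
    (hh : ∀ t : ℝ, 0 < t → beta ≤ 1 / t → h t = t ^ 2 * Phi (1 / t) ^ gamma)
    (hzero : gaugeMeasure h (escapingSetGE lam R) = 0) :
    gaugeMeasure h (escapingSet (expMap lam)) = 0 := by
  have hmono : ∀ x y : ℝ, beta ≤ x → x ≤ y → Phi x ≤ Phi y :=
    fun x y hx hxy => Phi_mono hlam'.1 hbeta hfix hPhi hx hxy
  have hnonneg : ∀ x : ℝ, beta ≤ x → 0 ≤ Phi x :=
    fun x hx => Phi_nonneg hlam'.1 hbeta hfix hPhi hx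
  have hsub : escapingSet (expMap lam) ⊆
      ⋃ N : ℕ, (expMap lam)^[N] ⁻¹' (escapingSetGE lam R) := by
    intro z hz
    have hz' : Tendsto (fun n : ℕ => ‖(expMap lam)^[n] z‖) atTop atTop := hz
    obtain ⟨N, hN⟩ := eventually_atTop.mp
      (hz'.eventually_ge_atTop (‖lam‖ * Real.exp R))
    refine mem_iUnion.mpr ⟨N, ?_, ?_⟩
    · show Tendsto (fun n : ℕ =>
        ‖(expMap lam)^[n] ((expMap lam)^[N] z)‖) atTop atTop
      refine (hz'.comp (tendsto_add_atTop_nat N)).congr fun n => ?_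
      simp only [Function.comp_apply]
      rw [Function.iterate_add_apply]
    · intro n
      have h1 : ‖lam‖ * Real.exp R ≤
          ‖(expMap lam)^[n + N + 1] z‖ := hN (n + N + 1) (by omega)
      have h3 : ‖(expMap lam)^[n + N + 1] z‖ =
          ‖lam‖ * Real.exp (((expMap lam)^[n + N] z).re) := by
        rw [Function.iterate_succ_apply']
        simp [expMap, Complex.norm_exp]
      rw [h3] at h1
      have hl0 : 0 < ‖lam‖ := norm_pos_iff.mpr hlam
      have h4 : Real.exp R ≤ Real.exp (((expMap lam)^[n + N] z).re) :=
        (mul_le_mul_iff_right₀ hl0).mp h1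
      have h5 : R ≤ ((expMap lam)^[n + N] z).re := Real.exp_le_exp.mp h4
      rwa [← Function.iterate_add_apply]
  refine measure_mono_null hsub (measure_iUnion_null fun N =>
    iter_preimage_null lam hlam hbeta hgamma hmono hnonneg hh hh0 N _ hzero)
end
end
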